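/- arXiv:1302.6397 — 3 statements merged into one kernel-verified Lean document; each statement's English description precedes it below -/
import Mathlib

section
/- The subspace 𝔲(3) = {X ∈ 𝔰𝔬(7) : X e₀ = 0 and XE = EX} is a Lie subalgebra of 𝔰𝔬(7), one has the direct sum decomposition 𝔰𝔬(7) = 𝔪 ⊕ 𝔲(3), and [𝔲(3), 𝔪] ⊆ 𝔪, i.e. 𝔪 is invariant under the adjoint action of 𝔲(3). -/
/-!
Common setup: 𝔤 = 𝔰𝔬(7) realised as real skew-symmetric 7×7 matrices with
bracket `bk X Y = X*Y - Y*X`; the matrices A, B, C, A', B', C', P, Q, R, P', Q', R', E;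
the subspaces 𝔪 (`mm`) and 𝔲(3) (`u3`); the dual functionals a, …, r' (written
`fa, …, fr'`), given by the explicit formulas that characterise them as the unique
linear functionals on 𝔰𝔬(7) vanishing on 𝔲(3) whose restrictions to 𝔪 are dual to
the chosen basis; the invariant forms; the endomorphisms I, J, K; and the
Chevalley–Eilenberg differentials `dM1`, `dM2` restricted to 𝔪.
-/

open Matrix

noncomputable section

/-- Ambient space of real 7×7 matrices (rows/columns indexed by `Fin 7`). -/
abbrev M7 : Type := Matrix (Fin 7) (Fin 7) ℝ

/-- `Eij i j`: the skew matrix with `(i,j)` entry `1`, `(j,i)` entry `-1`, all others `0`. -/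
def Eij (i j : Fin 7) : M7 := Matrix.single i j 1 - Matrix.single j i 1

def mA  : M7 := Eij 0 1
def mB  : M7 := Eij 0 2
def mC  : M7 := Eij 0 3
def mA' : M7 := Eij 0 4
def mB' : M7 := Eij 0 5
def mC' : M7 := Eij 0 6
def mP  : M7 := Eij 2 3 - Eij 5 6
def mQ  : M7 := Eij 3 1 - Eij 6 4
def mR  : M7 := Eij 1 2 - Eij 4 5
def mP' : M7 := Eij 2 6 - Eij 3 5
def mQ' : M7 := Eij 3 4 - Eij 1 6
def mR' : M7 := Eij 1 5 - Eij 2 4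
def mE  : M7 := Eij 1 4 + Eij 2 5 + Eij 3 6

/-- The Lie bracket `[X,Y] = XY - YX`. -/
def bk (X Y : M7) : M7 := X * Y - Y * X

/-- 𝔰𝔬(7): the skew-symmetric matrices. -/
def so7 : Set M7 := {X : M7 | Xᵀ = -X}

/-- The first standard basis vector e₀ of ℝ⁷. -/
def e0 : Fin 7 → ℝ := fun i => if i = 0 then 1 else 0

/-- 𝔲(3) = {X ∈ 𝔰𝔬(7) : X e₀ = 0 and XE = EX}. -/
def u3 : Set M7 := {X : M7 | Xᵀ = -X ∧ X.mulVec e0 = 0 ∧ X * mE = mE * X}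

/-- 𝔪: the span of the twelve matrices A, …, R'. -/
def mm : Submodule ℝ M7 :=
  Submodule.span ℝ ({mA, mB, mC, mA', mB', mC', mP, mQ, mR, mP', mQ', mR'} : Set M7)

/- The linear functionals on 𝔰𝔬(7) vanishing on 𝔲(3) whose restrictions to 𝔪 form the
dual basis of the basis A, …, R' (given by their explicit formulas on skew matrices,
extended to all of `M7`). -/
def fa  (X : M7) : ℝ := (X 0 1 - X 1 0) / 2
def fb  (X : M7) : ℝ := (X 0 2 - X 2 0) / 2
def fc  (X : M7) : ℝ := (X 0 3 - X 3 0) / 2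
def fa' (X : M7) : ℝ := (X 0 4 - X 4 0) / 2
def fb' (X : M7) : ℝ := (X 0 5 - X 5 0) / 2
def fc' (X : M7) : ℝ := (X 0 6 - X 6 0) / 2
def fp  (X : M7) : ℝ := (X 2 3 - X 3 2 - X 5 6 + X 6 5) / 4
def fq  (X : M7) : ℝ := (X 3 1 - X 1 3 - X 6 4 + X 4 6) / 4
def fr  (X : M7) : ℝ := (X 1 2 - X 2 1 - X 4 5 + X 5 4) / 4
def fp' (X : M7) : ℝ := (X 2 6 - X 6 2 - X 3 5 + X 5 3) / 4
def fq' (X : M7) : ℝ := (X 3 4 - X 4 3 - X 1 6 + X 6 1) / 4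
def fr' (X : M7) : ℝ := (X 1 5 - X 5 1 - X 2 4 + X 4 2) / 4

/-- Wedge of two 1-forms: `(α∧β)(X,Y) = α(X)β(Y) - β(X)α(Y)`. -/
def wdg2 (α β : M7 → ℝ) (X Y : M7) : ℝ := α X * β Y - β X * α Y

/-- Wedge of three 1-forms (determinant convention). -/
def wdg3 (α β γ : M7 → ℝ) (X Y Z : M7) : ℝ :=
  α X * β Y * γ Z - α X * γ Y * β Z - β X * α Y * γ Z
    + β X * γ Y * α Z + γ X * α Y * β Z - γ X * β Y * α Z

/-- ω₀ = a'∧a + b'∧b + c'∧c. -/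
def om0 (X Y : M7) : ℝ := wdg2 fa' fa X Y + wdg2 fb' fb X Y + wdg2 fc' fc X Y

/-- ω̃₀ = p'∧p + q'∧q + r'∧r. -/
def omt0 (X Y : M7) : ℝ := wdg2 fp' fp X Y + wdg2 fq' fq X Y + wdg2 fr' fr X Y

/-- ω_J = p∧a - p'∧a' + q∧b - q'∧b' + r∧c - r'∧c'. -/
def omJ (X Y : M7) : ℝ :=
  wdg2 fp fa X Y - wdg2 fp' fa' X Y + wdg2 fq fb X Y - wdg2 fq' fb' X Y
    + wdg2 fr fc X Y - wdg2 fr' fc' X Y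

/-- ω_K = p'∧a + p∧a' + q'∧b + q∧b' + r'∧c + r∧c'. -/
def omK (X Y : M7) : ℝ :=
  wdg2 fp' fa X Y + wdg2 fp fa' X Y + wdg2 fq' fb X Y + wdg2 fq fb' X Y
    + wdg2 fr' fc X Y + wdg2 fr fc' X Y

/-- ω_I = λω₀ + μω̃₀. -/
def omI (lm mu : ℝ) (X Y : M7) : ℝ := lm * om0 X Y + mu * omt0 X Y

/-- The metric g = λ(a⊗a + … + c'⊗c') + μ(p⊗p + … + r'⊗r'). -/
def gmet (lm mu : ℝ) (X Y : M7) : ℝ :=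
  lm * (fa X * fa Y + fb X * fb Y + fc X * fc Y
      + fa' X * fa' Y + fb' X * fb' Y + fc' X * fc' Y)
  + mu * (fp X * fp Y + fq X * fq Y + fr X * fr Y
      + fp' X * fp' Y + fq' X * fq' Y + fr' X * fr' Y)

/-- The endomorphism I of 𝔪 (extended to `M7` via the dual functionals):
A↦A', …, R↦R', A'↦-A, …, R'↦-R. -/
def Iop (X : M7) : M7 :=
  fa X • mA' + fb X • mB' + fc X • mC' + fp X • mP' + fq X • mQ' + fr X • mR'
    - fa' X • mA - fb' X • mB - fc' X • mC - fp' X • mP - fq' X • mQ - fr' X • mR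

/-- The endomorphism J of 𝔪: A↦λP, …, C'↦-λR', P↦-μA, …, R'↦μC'. -/
def Jop (lm mu : ℝ) (X : M7) : M7 :=
  (lm * fa X) • mP + (lm * fb X) • mQ + (lm * fc X) • mR
    - (lm * fa' X) • mP' - (lm * fb' X) • mQ' - (lm * fc' X) • mR'
    - (mu * fp X) • mA - (mu * fq X) • mB - (mu * fr X) • mC
    + (mu * fp' X) • mA' + (mu * fq' X) • mB' + (mu * fr' X) • mC'

/-- The endomorphism K of 𝔪: A↦λP', …, C'↦λR, P'↦-μA, …, R↦-μC'. -/
def Kop (lm mu : ℝ) (X : M7) : M7 :=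
  (lm * fa X) • mP' + (lm * fb X) • mQ' + (lm * fc X) • mR'
    + (lm * fa' X) • mP + (lm * fb' X) • mQ + (lm * fc' X) • mR
    - (mu * fp' X) • mA - (mu * fq' X) • mB - (mu * fr' X) • mC
    - (mu * fp X) • mA' - (mu * fq X) • mB' - (mu * fr X) • mC'

/-- `d_Mα(X,Y) = -α([X,Y])` for a 1-form α. -/
def dM1 (α : M7 → ℝ) (X Y : M7) : ℝ := -α (bk X Y)

/-- `d_Mω(X,Y,Z) = -ω([X,Y],Z) + ω([X,Z],Y) - ω([Y,Z],X)` for a 2-form ω. -/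
def dM2 (ω : M7 → M7 → ℝ) (X Y Z : M7) : ℝ :=
  -ω (bk X Y) Z + ω (bk X Z) Y - ω (bk Y Z) X

/-- For an endomorphism T and a 3-form β, `(Tβ)(X,Y,Z) = -β(TX,TY,TZ)`. -/
def act3 (T : M7 → M7) (β : M7 → M7 → M7 → ℝ) (X Y Z : M7) : ℝ :=
  -β (T X) (T Y) (T Z)

/-- Φ = Σ_cyc (a∧b∧r - a'∧b'∧r + a∧b'∧r' + a'∧b∧r'). -/
def Phi (X Y Z : M7) : ℝ :=
  (wdg3 fa fb fr X Y Z - wdg3 fa' fb' fr X Y Z + wdg3 fa fb' fr' X Y Z + wdg3 fa' fb fr' X Y Z)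
  + (wdg3 fb fc fp X Y Z - wdg3 fb' fc' fp X Y Z + wdg3 fb fc' fp' X Y Z + wdg3 fb' fc fp' X Y Z)
  + (wdg3 fc fa fq X Y Z - wdg3 fc' fa' fq X Y Z + wdg3 fc fa' fq' X Y Z + wdg3 fc' fa fq' X Y Z)

/-- Ψ = Σ_cyc (p∧q∧r - 3 p∧q'∧r'). -/
def Psi (X Y Z : M7) : ℝ :=
  (wdg3 fp fq fr X Y Z - 3 * wdg3 fp fq' fr' X Y Z)
  + (wdg3 fq fr fp X Y Z - 3 * wdg3 fq fr' fp' X Y Z)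
  + (wdg3 fr fp fq X Y Z - 3 * wdg3 fr fp' fq' X Y Z)

/-- β_I = J d_Mω_J + K d_Mω_K. -/
def betaI (lm mu : ℝ) (X Y Z : M7) : ℝ :=
  act3 (Jop lm mu) (dM2 omJ) X Y Z + act3 (Kop lm mu) (dM2 omK) X Y Z

/-- β_J = K d_Mω_K + I d_Mω_I. -/
def betaJ (lm mu : ℝ) (X Y Z : M7) : ℝ :=
  act3 (Kop lm mu) (dM2 omK) X Y Z + act3 Iop (dM2 (omI lm mu)) X Y Z

/-- β_K = I d_Mω_I + J d_Mω_J. -/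
def betaK (lm mu : ℝ) (X Y Z : M7) : ℝ :=
  act3 Iop (dM2 (omI lm mu)) X Y Z + act3 (Jop lm mu) (dM2 omJ) X Y Z

/-- ψ⁽³⁾ = (1/12)(β_I + β_J + β_K). -/
def psi3 (lm mu : ℝ) (X Y Z : M7) : ℝ :=
  (1/12) * (betaI lm mu X Y Z + betaJ lm mu X Y Z + betaK lm mu X Y Z)

end

section Helpers

lemma std_mul (i j k l : Fin 7) :
    Matrix.single i j (1:ℝ) * Matrix.single k l 1 =
      if j = k then Matrix.single i l 1 else 0 := by
  by_cases h : j = k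
  · subst h; simp
  · simp [h]

lemma Eij_apply (i j a b : Fin 7) :
    Eij i j a b = (if i = a ∧ j = b then (1:ℝ) else 0) - (if j = a ∧ i = b then 1 else 0) := by
  simp [Eij, Matrix.single]

lemma Eij_skew (i j : Fin 7) : (Eij i j)ᵀ = -Eij i j := by
  ext a b
  simp [Eij, Matrix.single, and_comm]

-- u3 is closed under the operations
lemma u3_zero : (0 : M7) ∈ u3 := by
  refine ⟨by simp, by simp, by simp⟩

lemma u3_add : ∀ X ∈ u3, ∀ Y ∈ u3, X + Y ∈ u3 := by
  rintro X ⟨hX1, hX2, hX3⟩ Y ⟨hY1, hY2, hY3⟩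
  refine ⟨by rw [Matrix.transpose_add, hX1, hY1]; abel, ?_, ?_⟩
  · rw [Matrix.add_mulVec, hX2, hY2]; simp
  · rw [add_mul, mul_add, hX3, hY3]

lemma u3_smul : ∀ (t : ℝ), ∀ X ∈ u3, t • X ∈ u3 := by
  rintro t X ⟨hX1, hX2, hX3⟩
  refine ⟨by rw [Matrix.transpose_smul, hX1, smul_neg], ?_, ?_⟩
  · rw [Matrix.smul_mulVec, hX2]; simp
  · rw [Matrix.smul_mul, Matrix.mul_smul, hX3]

lemma u3_bk : ∀ X ∈ u3, ∀ Y ∈ u3, bk X Y ∈ u3 := by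
  rintro X ⟨hX1, hX2, hX3⟩ Y ⟨hY1, hY2, hY3⟩
  refine ⟨?_, ?_, ?_⟩
  · simp only [bk, Matrix.transpose_sub, Matrix.transpose_mul, hX1, hY1]
    simp [Matrix.neg_mul, Matrix.mul_neg]
    try abel
  · simp only [bk, Matrix.sub_mulVec, ← Matrix.mulVec_mulVec, hX2, hY2]
    simp
  · simp only [bk, sub_mul, mul_sub, mul_assoc]
    rw [hY3, hX3, ← mul_assoc, ← mul_assoc, hX3, hY3, mul_assoc, mul_assoc]

lemma u3_sub_so7 : u3 ⊆ so7 := fun _ hX => hX.1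

def skewSub : Submodule ℝ M7 where
  carrier := so7
  add_mem' := by
    intro a b ha hb
    simp only [so7, Set.mem_setOf_eq] at *
    rw [Matrix.transpose_add, ha, hb]; abel
  zero_mem' := by simp [so7]
  smul_mem' := by
    intro c a ha
    simp only [so7, Set.mem_setOf_eq] at *
    rw [Matrix.transpose_smul, ha, smul_neg]

lemma mm_sub_so7 : (mm : Set M7) ⊆ so7 := by
  have : mm ≤ skewSub := by
    rw [mm, Submodule.span_le]
    intro X hX
    simp only [Set.mem_insert_iff, Set.mem_singleton_iff] at hX
    rcases hX with h|h|h|h|h|h|h|h|h|h|h|h <;> subst h <;>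
      show _ᵀ = _ <;>
      simp only [mA, mB, mC, mA', mB', mC', mP, mQ, mR, mP', mQ', mR',
        Matrix.transpose_sub, Matrix.transpose_add, Eij_skew] <;> try abel
  exact this

end Helpers

lemma f0 (h : 0 < 7) : (⟨0,h⟩ : Fin 7) = 0 := rfl
lemma f1 (h : 1 < 7) : (⟨1,h⟩ : Fin 7) = 1 := rfl
lemma f2 (h : 2 < 7) : (⟨2,h⟩ : Fin 7) = 2 := rfl
lemma f3 (h : 3 < 7) : (⟨3,h⟩ : Fin 7) = 3 := rfl
lemma f4 (h : 4 < 7) : (⟨4,h⟩ : Fin 7) = 4 := rfl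
lemma f5 (h : 5 < 7) : (⟨5,h⟩ : Fin 7) = 5 := rfl
lemma f6 (h : 6 < 7) : (⟨6,h⟩ : Fin 7) = 6 := rfl

noncomputable section Proj

/-- The projection of X onto mm along u3 (for skew X). -/
def Lproj (X : M7) : M7 :=
  fa X • mA + fb X • mB + fc X • mC + fa' X • mA' + fb' X • mB' + fc' X • mC'
    + fp X • mP + fq X • mQ + fr X • mR + fp' X • mP' + fq' X • mQ' + fr' X • mR'

/-- A basis of u3. -/
def v1 : M7 := Eij 1 2 + Eij 4 5
def v2 : M7 := Eij 1 3 + Eij 4 6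
def v3 : M7 := Eij 2 3 + Eij 5 6
def v4 : M7 := Eij 1 4
def v5 : M7 := Eij 2 5
def v6 : M7 := Eij 3 6
def v7 : M7 := Eij 1 5 + Eij 2 4
def v8 : M7 := Eij 1 6 + Eij 3 4
def v9 : M7 := Eij 2 6 + Eij 3 5

/-- u3-part of a skew matrix. -/
def Uproj (X : M7) : M7 :=
  ((X 1 2 + X 4 5)/2) • v1 + ((X 1 3 + X 4 6)/2) • v2 + ((X 2 3 + X 5 6)/2) • v3
    + X 1 4 • v4 + X 2 5 • v5 + X 3 6 • v6
    + ((X 1 5 + X 2 4)/2) • v7 + ((X 1 6 + X 3 4)/2) • v8 + ((X 2 6 + X 3 5)/2) • v9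

lemma skew_entries {X : M7} (hX : Xᵀ = -X) : ∀ a b, X b a = -X a b := by
  intro a b
  have := congrFun (congrFun hX a) b
  simpa using this

set_option maxHeartbeats 3200000 in
lemma skew_decomp {X : M7} (hX : Xᵀ = -X) : X = Lproj X + Uproj X := by
  have hs := skew_entries hX
  ext a b
  simp only [Lproj, Uproj, fa, fb, fc, fa', fb', fc',
    fp, fq, fr, fp', fq', fr', v1, v2, v3, v4, v5, v6, v7, v8, v9,
    mA, mB, mC, mA', mB', mC', mP, mQ, mR, mP', mQ', mR',
    Matrix.add_apply, Matrix.sub_apply, Matrix.smul_apply, Eij_apply, smul_eq_mul]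
  fin_cases a <;> fin_cases b <;>
    simp (config := { decide := true }) only [ite_true, ite_false, and_true, and_false,
      true_and, false_and, reduceIte, f0, f1, f2, f3, f4, f5, f6] <;>
    first
      | (simp only [hs 0 1, hs 0 2, hs 0 3, hs 0 4, hs 0 5, hs 0 6, hs 1 2, hs 1 3, hs 1 4, hs 1 5, hs 1 6, hs 2 3, hs 2 4, hs 2 5, hs 2 6, hs 3 4, hs 3 5, hs 3 6, hs 4 5, hs 4 6, hs 5 6]; ring1)
      | linarith [hs 0 0, hs 1 1, hs 2 2, hs 3 3, hs 4 4, hs 5 5, hs 6 6]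

end Proj

noncomputable section Lin

lemma Lproj_add (X Y : M7) : Lproj (X + Y) = Lproj X + Lproj Y := by
  simp only [Lproj, fa, fb, fc, fa', fb', fc', fp, fq, fr, fp', fq', fr', Matrix.add_apply]
  module

lemma Lproj_smul (c : ℝ) (X : M7) : Lproj (c • X) = c • Lproj X := by
  simp only [Lproj, fa, fb, fc, fa', fb', fc', fp, fq, fr, fp', fq', fr',
    Matrix.smul_apply, smul_eq_mul]
  module

lemma Lproj_zero : Lproj (0 : M7) = 0 := by
  simp [Lproj, fa, fb, fc, fa', fb', fc', fp, fq, fr, fp', fq', fr']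

lemma Lproj_mem (X : M7) : Lproj X ∈ mm := by
  have h : ∀ Y ∈ ({mA, mB, mC, mA', mB', mC', mP, mQ, mR, mP', mQ', mR'} : Set M7), Y ∈ mm :=
    fun Y hY => Submodule.subset_span hY
  refine add_mem (add_mem (add_mem (add_mem (add_mem (add_mem (add_mem (add_mem (add_mem
    (add_mem (add_mem (Submodule.smul_mem _ _ ?_) (Submodule.smul_mem _ _ ?_))
    (Submodule.smul_mem _ _ ?_)) (Submodule.smul_mem _ _ ?_)) (Submodule.smul_mem _ _ ?_))
    (Submodule.smul_mem _ _ ?_)) (Submodule.smul_mem _ _ ?_)) (Submodule.smul_mem _ _ ?_))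
    (Submodule.smul_mem _ _ ?_)) (Submodule.smul_mem _ _ ?_)) (Submodule.smul_mem _ _ ?_))
    (Submodule.smul_mem _ _ ?_) <;> apply h <;> simp

/-- On u3 all twelve functionals vanish, i.e. Lproj = 0. -/
lemma Lproj_u3 {X : M7} (hX : X ∈ u3) : Lproj X = 0 := by
  obtain ⟨h1, h2, h3⟩ := hX
  have hs := skew_entries h1
  have hv : ∀ i, X i 0 = 0 := by
    intro i
    have := congrFun h2 i
    simpa [Matrix.mulVec, dotProduct, e0, Fin.sum_univ_seven] using this
  have hcomm : ∀ a b : Fin 7, (X * mE) a b = (mE * X) a b := fun a b =>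
    congrFun (congrFun h3 a) b
  have h26 := hcomm 2 6
  have h61 := hcomm 6 1
  have h15 := hcomm 1 5
  have h23 := hcomm 2 3
  have h31 := hcomm 3 1
  have h12 := hcomm 1 2
  simp (config := { decide := true }) only [Matrix.mul_apply, Fin.sum_univ_seven, mE,
    Matrix.add_apply, Eij_apply, ite_true, ite_false, and_true, and_false, true_and,
    false_and, reduceIte, mul_zero, zero_mul, mul_one, one_mul, mul_neg, neg_mul,
    add_zero, zero_add, sub_zero, zero_sub, neg_zero, mul_sub, sub_self,
    f0, f1, f2, f3, f4, f5, f6] at h26 h61 h15 h23 h31 h12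
  have e1 : fa X = 0 := by simp [fa, hs 1 0, hv 1]
  have e2 : fb X = 0 := by simp [fb, hs 2 0, hv 2]
  have e3 : fc X = 0 := by simp [fc, hs 3 0, hv 3]
  have e4 : fa' X = 0 := by simp [fa', hs 4 0, hv 4]
  have e5 : fb' X = 0 := by simp [fb', hs 5 0, hv 5]
  have e6 : fc' X = 0 := by simp [fc', hs 6 0, hv 6]
  have e7 : fp X = 0 := by simp only [fp]; linarith [h26, hs 2 3, hs 5 6]
  have e8 : fq X = 0 := by simp only [fq]; linarith [h61, hs 1 3, hs 4 6]
  have e9 : fr X = 0 := by simp only [fr]; linarith [h15, hs 1 2, hs 4 5]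
  have e10 : fp' X = 0 := by simp only [fp']; linarith [h23, hs 2 6, hs 3 5]
  have e11 : fq' X = 0 := by simp only [fq']; linarith [h31, hs 3 4, hs 1 6]
  have e12 : fr' X = 0 := by simp only [fr']; linarith [h12, hs 1 5, hs 2 4]
  simp [Lproj, e1, e2, e3, e4, e5, e6, e7, e8, e9, e10, e11, e12]

/-- Every element of mm is fixed by Lproj. -/
lemma Lproj_fix : ∀ X ∈ mm, Lproj X = X := by
  intro X hX
  induction hX using Submodule.span_induction with
  | mem y hy =>
    simp only [Set.mem_insert_iff, Set.mem_singleton_iff] at hy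
    rcases hy with h|h|h|h|h|h|h|h|h|h|h|h <;> subst h <;>
      (simp (config := { decide := true }) only [Lproj, fa, fb, fc, fa', fb', fc', fp, fq,
        fr, fp', fq', fr', mA, mB, mC, mA', mB', mC', mP, mQ, mR, mP', mQ', mR',
        Matrix.sub_apply, Eij_apply, ite_true, ite_false, and_true, and_false, true_and,
        false_and, reduceIte]
       norm_num)
  | zero => exact Lproj_zero
  | add a b _ _ iha ihb => rw [Lproj_add, iha, ihb]
  | smul c a _ iha => rw [Lproj_smul, iha]

lemma mm_inter_u3 : ∀ X : M7, X ∈ mm → X ∈ u3 → X = 0 := by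
  intro X h1 h2
  rw [← Lproj_fix X h1, Lproj_u3 h2]

end Lin

noncomputable section Brk

lemma hmmA : mA ∈ mm := Submodule.subset_span (by simp)
lemma hmmB : mB ∈ mm := Submodule.subset_span (by simp)
lemma hmmC : mC ∈ mm := Submodule.subset_span (by simp)
lemma hmmAp : mA' ∈ mm := Submodule.subset_span (by simp)
lemma hmmBp : mB' ∈ mm := Submodule.subset_span (by simp)
lemma hmmCp : mC' ∈ mm := Submodule.subset_span (by simp)
lemma hmmP : mP ∈ mm := Submodule.subset_span (by simp)
lemma hmmQ : mQ ∈ mm := Submodule.subset_span (by simp)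
lemma hmmR : mR ∈ mm := Submodule.subset_span (by simp)
lemma hmmPp : mP' ∈ mm := Submodule.subset_span (by simp)
lemma hmmQp : mQ' ∈ mm := Submodule.subset_span (by simp)
lemma hmmRp : mR' ∈ mm := Submodule.subset_span (by simp)

lemma bk_addl (A B C : M7) : bk (A + B) C = bk A C + bk B C := by
  simp only [bk, add_mul, mul_add]; abel

lemma bk_smull (c : ℝ) (A B : M7) : bk (c • A) B = c • bk A B := by
  simp only [bk, Matrix.smul_mul, Matrix.mul_smul, smul_sub]

lemma bk_addr (A B C : M7) : bk A (B + C) = bk A B + bk A C := by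
  simp only [bk, add_mul, mul_add]; abel

lemma bk_smulr (c : ℝ) (A B : M7) : bk A (c • B) = c • bk A B := by
  simp only [bk, Matrix.smul_mul, Matrix.mul_smul, smul_sub]

lemma bkid_0_0 : bk v1 mA = -mB := by
  simp only [bk, mA, mB, v1, Eij, sub_mul, mul_sub, add_mul, mul_add, std_mul]
  simp (config := { decide := true }) only [ite_true, ite_false, reduceIte]
  abel
lemma bkmem_0_0 : bk v1 mA ∈ mm := by rw [bkid_0_0]; exact neg_mem hmmB

lemma bkid_0_1 : bk v1 mB = mA := by
  simp only [bk, mA, mB, v1, Eij, sub_mul, mul_sub, add_mul, mul_add, std_mul]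
  simp (config := { decide := true }) only [ite_true, ite_false, reduceIte]
  abel
lemma bkmem_0_1 : bk v1 mB ∈ mm := by rw [bkid_0_1]; exact hmmA

lemma bkid_0_2 : bk v1 mC = (0 : M7) := by
  simp only [bk, mC, v1, Eij, sub_mul, mul_sub, add_mul, mul_add, std_mul]
  simp (config := { decide := true }) only [ite_true, ite_false, reduceIte]
  abel
lemma bkmem_0_2 : bk v1 mC ∈ mm := by rw [bkid_0_2]; exact zero_mem _

lemma bkid_0_3 : bk v1 mA' = -mB' := by
  simp only [bk, mA', mB', v1, Eij, sub_mul, mul_sub, add_mul, mul_add, std_mul]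
  simp (config := { decide := true }) only [ite_true, ite_false, reduceIte]
  abel
lemma bkmem_0_3 : bk v1 mA' ∈ mm := by rw [bkid_0_3]; exact neg_mem hmmBp

lemma bkid_0_4 : bk v1 mB' = mA' := by
  simp only [bk, mA', mB', v1, Eij, sub_mul, mul_sub, add_mul, mul_add, std_mul]
  simp (config := { decide := true }) only [ite_true, ite_false, reduceIte]
  abel
lemma bkmem_0_4 : bk v1 mB' ∈ mm := by rw [bkid_0_4]; exact hmmAp

lemma bkid_0_5 : bk v1 mC' = (0 : M7) := by
  simp only [bk, mC', v1, Eij, sub_mul, mul_sub, add_mul, mul_add, std_mul]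
  simp (config := { decide := true }) only [ite_true, ite_false, reduceIte]
  abel
lemma bkmem_0_5 : bk v1 mC' ∈ mm := by rw [bkid_0_5]; exact zero_mem _

lemma bkid_0_6 : bk v1 mP = -mQ := by
  simp only [bk, mP, mQ, v1, Eij, sub_mul, mul_sub, add_mul, mul_add, std_mul]
  simp (config := { decide := true }) only [ite_true, ite_false, reduceIte]
  abel
lemma bkmem_0_6 : bk v1 mP ∈ mm := by rw [bkid_0_6]; exact neg_mem hmmQ

lemma bkid_0_7 : bk v1 mQ = mP := by
  simp only [bk, mP, mQ, v1, Eij, sub_mul, mul_sub, add_mul, mul_add, std_mul]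
  simp (config := { decide := true }) only [ite_true, ite_false, reduceIte]
  abel
lemma bkmem_0_7 : bk v1 mQ ∈ mm := by rw [bkid_0_7]; exact hmmP

lemma bkid_0_8 : bk v1 mR = (0 : M7) := by
  simp only [bk, mR, v1, Eij, sub_mul, mul_sub, add_mul, mul_add, std_mul]
  simp (config := { decide := true }) only [ite_true, ite_false, reduceIte]
  abel
lemma bkmem_0_8 : bk v1 mR ∈ mm := by rw [bkid_0_8]; exact zero_mem _

lemma bkid_0_9 : bk v1 mP' = -mQ' := by
  simp only [bk, mP', mQ', v1, Eij, sub_mul, mul_sub, add_mul, mul_add, std_mul]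
  simp (config := { decide := true }) only [ite_true, ite_false, reduceIte]
  abel
lemma bkmem_0_9 : bk v1 mP' ∈ mm := by rw [bkid_0_9]; exact neg_mem hmmQp

lemma bkid_0_10 : bk v1 mQ' = mP' := by
  simp only [bk, mP', mQ', v1, Eij, sub_mul, mul_sub, add_mul, mul_add, std_mul]
  simp (config := { decide := true }) only [ite_true, ite_false, reduceIte]
  abel
lemma bkmem_0_10 : bk v1 mQ' ∈ mm := by rw [bkid_0_10]; exact hmmPp

lemma bkid_0_11 : bk v1 mR' = (0 : M7) := by
  simp only [bk, mR', v1, Eij, sub_mul, mul_sub, add_mul, mul_add, std_mul]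
  simp (config := { decide := true }) only [ite_true, ite_false, reduceIte]
  abel
lemma bkmem_0_11 : bk v1 mR' ∈ mm := by rw [bkid_0_11]; exact zero_mem _

lemma bkid_1_0 : bk v2 mA = -mC := by
  simp only [bk, mA, mC, v2, Eij, sub_mul, mul_sub, add_mul, mul_add, std_mul]
  simp (config := { decide := true }) only [ite_true, ite_false, reduceIte]
  abel
lemma bkmem_1_0 : bk v2 mA ∈ mm := by rw [bkid_1_0]; exact neg_mem hmmC

lemma bkid_1_1 : bk v2 mB = (0 : M7) := by
  simp only [bk, mB, v2, Eij, sub_mul, mul_sub, add_mul, mul_add, std_mul]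
  simp (config := { decide := true }) only [ite_true, ite_false, reduceIte]
  abel
lemma bkmem_1_1 : bk v2 mB ∈ mm := by rw [bkid_1_1]; exact zero_mem _

lemma bkid_1_2 : bk v2 mC = mA := by
  simp only [bk, mA, mC, v2, Eij, sub_mul, mul_sub, add_mul, mul_add, std_mul]
  simp (config := { decide := true }) only [ite_true, ite_false, reduceIte]
  abel
lemma bkmem_1_2 : bk v2 mC ∈ mm := by rw [bkid_1_2]; exact hmmA

lemma bkid_1_3 : bk v2 mA' = -mC' := by
  simp only [bk, mA', mC', v2, Eij, sub_mul, mul_sub, add_mul, mul_add, std_mul]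
  simp (config := { decide := true }) only [ite_true, ite_false, reduceIte]
  abel
lemma bkmem_1_3 : bk v2 mA' ∈ mm := by rw [bkid_1_3]; exact neg_mem hmmCp

lemma bkid_1_4 : bk v2 mB' = (0 : M7) := by
  simp only [bk, mB', v2, Eij, sub_mul, mul_sub, add_mul, mul_add, std_mul]
  simp (config := { decide := true }) only [ite_true, ite_false, reduceIte]
  abel
lemma bkmem_1_4 : bk v2 mB' ∈ mm := by rw [bkid_1_4]; exact zero_mem _

lemma bkid_1_5 : bk v2 mC' = mA' := by
  simp only [bk, mA', mC', v2, Eij, sub_mul, mul_sub, add_mul, mul_add, std_mul]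
  simp (config := { decide := true }) only [ite_true, ite_false, reduceIte]
  abel
lemma bkmem_1_5 : bk v2 mC' ∈ mm := by rw [bkid_1_5]; exact hmmAp

lemma bkid_1_6 : bk v2 mP = -mR := by
  simp only [bk, mP, mR, v2, Eij, sub_mul, mul_sub, add_mul, mul_add, std_mul]
  simp (config := { decide := true }) only [ite_true, ite_false, reduceIte]
  abel
lemma bkmem_1_6 : bk v2 mP ∈ mm := by rw [bkid_1_6]; exact neg_mem hmmR

lemma bkid_1_7 : bk v2 mQ = (0 : M7) := by
  simp only [bk, mQ, v2, Eij, sub_mul, mul_sub, add_mul, mul_add, std_mul]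
  simp (config := { decide := true }) only [ite_true, ite_false, reduceIte]
  abel
lemma bkmem_1_7 : bk v2 mQ ∈ mm := by rw [bkid_1_7]; exact zero_mem _

lemma bkid_1_8 : bk v2 mR = mP := by
  simp only [bk, mP, mR, v2, Eij, sub_mul, mul_sub, add_mul, mul_add, std_mul]
  simp (config := { decide := true }) only [ite_true, ite_false, reduceIte]
  abel
lemma bkmem_1_8 : bk v2 mR ∈ mm := by rw [bkid_1_8]; exact hmmP

lemma bkid_1_9 : bk v2 mP' = -mR' := by
  simp only [bk, mP', mR', v2, Eij, sub_mul, mul_sub, add_mul, mul_add, std_mul]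
  simp (config := { decide := true }) only [ite_true, ite_false, reduceIte]
  abel
lemma bkmem_1_9 : bk v2 mP' ∈ mm := by rw [bkid_1_9]; exact neg_mem hmmRp

lemma bkid_1_10 : bk v2 mQ' = (0 : M7) := by
  simp only [bk, mQ', v2, Eij, sub_mul, mul_sub, add_mul, mul_add, std_mul]
  simp (config := { decide := true }) only [ite_true, ite_false, reduceIte]
  abel
lemma bkmem_1_10 : bk v2 mQ' ∈ mm := by rw [bkid_1_10]; exact zero_mem _

lemma bkid_1_11 : bk v2 mR' = mP' := by
  simp only [bk, mP', mR', v2, Eij, sub_mul, mul_sub, add_mul, mul_add, std_mul]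
  simp (config := { decide := true }) only [ite_true, ite_false, reduceIte]
  abel
lemma bkmem_1_11 : bk v2 mR' ∈ mm := by rw [bkid_1_11]; exact hmmPp

lemma bkid_2_0 : bk v3 mA = (0 : M7) := by
  simp only [bk, mA, v3, Eij, sub_mul, mul_sub, add_mul, mul_add, std_mul]
  simp (config := { decide := true }) only [ite_true, ite_false, reduceIte]
  abel
lemma bkmem_2_0 : bk v3 mA ∈ mm := by rw [bkid_2_0]; exact zero_mem _

lemma bkid_2_1 : bk v3 mB = -mC := by
  simp only [bk, mB, mC, v3, Eij, sub_mul, mul_sub, add_mul, mul_add, std_mul]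
  simp (config := { decide := true }) only [ite_true, ite_false, reduceIte]
  abel
lemma bkmem_2_1 : bk v3 mB ∈ mm := by rw [bkid_2_1]; exact neg_mem hmmC

lemma bkid_2_2 : bk v3 mC = mB := by
  simp only [bk, mB, mC, v3, Eij, sub_mul, mul_sub, add_mul, mul_add, std_mul]
  simp (config := { decide := true }) only [ite_true, ite_false, reduceIte]
  abel
lemma bkmem_2_2 : bk v3 mC ∈ mm := by rw [bkid_2_2]; exact hmmB

lemma bkid_2_3 : bk v3 mA' = (0 : M7) := by
  simp only [bk, mA', v3, Eij, sub_mul, mul_sub, add_mul, mul_add, std_mul]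
  simp (config := { decide := true }) only [ite_true, ite_false, reduceIte]
  abel
lemma bkmem_2_3 : bk v3 mA' ∈ mm := by rw [bkid_2_3]; exact zero_mem _

lemma bkid_2_4 : bk v3 mB' = -mC' := by
  simp only [bk, mB', mC', v3, Eij, sub_mul, mul_sub, add_mul, mul_add, std_mul]
  simp (config := { decide := true }) only [ite_true, ite_false, reduceIte]
  abel
lemma bkmem_2_4 : bk v3 mB' ∈ mm := by rw [bkid_2_4]; exact neg_mem hmmCp

lemma bkid_2_5 : bk v3 mC' = mB' := by
  simp only [bk, mB', mC', v3, Eij, sub_mul, mul_sub, add_mul, mul_add, std_mul]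
  simp (config := { decide := true }) only [ite_true, ite_false, reduceIte]
  abel
lemma bkmem_2_5 : bk v3 mC' ∈ mm := by rw [bkid_2_5]; exact hmmBp

lemma bkid_2_6 : bk v3 mP = (0 : M7) := by
  simp only [bk, mP, v3, Eij, sub_mul, mul_sub, add_mul, mul_add, std_mul]
  simp (config := { decide := true }) only [ite_true, ite_false, reduceIte]
  abel
lemma bkmem_2_6 : bk v3 mP ∈ mm := by rw [bkid_2_6]; exact zero_mem _

lemma bkid_2_7 : bk v3 mQ = -mR := by
  simp only [bk, mQ, mR, v3, Eij, sub_mul, mul_sub, add_mul, mul_add, std_mul]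
  simp (config := { decide := true }) only [ite_true, ite_false, reduceIte]
  abel
lemma bkmem_2_7 : bk v3 mQ ∈ mm := by rw [bkid_2_7]; exact neg_mem hmmR

lemma bkid_2_8 : bk v3 mR = mQ := by
  simp only [bk, mQ, mR, v3, Eij, sub_mul, mul_sub, add_mul, mul_add, std_mul]
  simp (config := { decide := true }) only [ite_true, ite_false, reduceIte]
  abel
lemma bkmem_2_8 : bk v3 mR ∈ mm := by rw [bkid_2_8]; exact hmmQ

lemma bkid_2_9 : bk v3 mP' = (0 : M7) := by
  simp only [bk, mP', v3, Eij, sub_mul, mul_sub, add_mul, mul_add, std_mul]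
  simp (config := { decide := true }) only [ite_true, ite_false, reduceIte]
  abel
lemma bkmem_2_9 : bk v3 mP' ∈ mm := by rw [bkid_2_9]; exact zero_mem _

lemma bkid_2_10 : bk v3 mQ' = -mR' := by
  simp only [bk, mQ', mR', v3, Eij, sub_mul, mul_sub, add_mul, mul_add, std_mul]
  simp (config := { decide := true }) only [ite_true, ite_false, reduceIte]
  abel
lemma bkmem_2_10 : bk v3 mQ' ∈ mm := by rw [bkid_2_10]; exact neg_mem hmmRp

lemma bkid_2_11 : bk v3 mR' = mQ' := by
  simp only [bk, mQ', mR', v3, Eij, sub_mul, mul_sub, add_mul, mul_add, std_mul]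
  simp (config := { decide := true }) only [ite_true, ite_false, reduceIte]
  abel
lemma bkmem_2_11 : bk v3 mR' ∈ mm := by rw [bkid_2_11]; exact hmmQp

lemma bkid_3_0 : bk v4 mA = -mA' := by
  simp only [bk, mA, mA', v4, Eij, sub_mul, mul_sub, add_mul, mul_add, std_mul]
  simp (config := { decide := true }) only [ite_true, ite_false, reduceIte]
  abel
lemma bkmem_3_0 : bk v4 mA ∈ mm := by rw [bkid_3_0]; exact neg_mem hmmAp

lemma bkid_3_1 : bk v4 mB = (0 : M7) := by
  simp only [bk, mB, v4, Eij, sub_mul, mul_sub, add_mul, mul_add, std_mul]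
  simp (config := { decide := true }) only [ite_true, ite_false, reduceIte]
  abel
lemma bkmem_3_1 : bk v4 mB ∈ mm := by rw [bkid_3_1]; exact zero_mem _

lemma bkid_3_2 : bk v4 mC = (0 : M7) := by
  simp only [bk, mC, v4, Eij, sub_mul, mul_sub, add_mul, mul_add, std_mul]
  simp (config := { decide := true }) only [ite_true, ite_false, reduceIte]
  abel
lemma bkmem_3_2 : bk v4 mC ∈ mm := by rw [bkid_3_2]; exact zero_mem _

lemma bkid_3_3 : bk v4 mA' = mA := by
  simp only [bk, mA, mA', v4, Eij, sub_mul, mul_sub, add_mul, mul_add, std_mul]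
  simp (config := { decide := true }) only [ite_true, ite_false, reduceIte]
  abel
lemma bkmem_3_3 : bk v4 mA' ∈ mm := by rw [bkid_3_3]; exact hmmA

lemma bkid_3_4 : bk v4 mB' = (0 : M7) := by
  simp only [bk, mB', v4, Eij, sub_mul, mul_sub, add_mul, mul_add, std_mul]
  simp (config := { decide := true }) only [ite_true, ite_false, reduceIte]
  abel
lemma bkmem_3_4 : bk v4 mB' ∈ mm := by rw [bkid_3_4]; exact zero_mem _

lemma bkid_3_5 : bk v4 mC' = (0 : M7) := by
  simp only [bk, mC', v4, Eij, sub_mul, mul_sub, add_mul, mul_add, std_mul]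
  simp (config := { decide := true }) only [ite_true, ite_false, reduceIte]
  abel
lemma bkmem_3_5 : bk v4 mC' ∈ mm := by rw [bkid_3_5]; exact zero_mem _

lemma bkid_3_6 : bk v4 mP = (0 : M7) := by
  simp only [bk, mP, v4, Eij, sub_mul, mul_sub, add_mul, mul_add, std_mul]
  simp (config := { decide := true }) only [ite_true, ite_false, reduceIte]
  abel
lemma bkmem_3_6 : bk v4 mP ∈ mm := by rw [bkid_3_6]; exact zero_mem _

lemma bkid_3_7 : bk v4 mQ = -mQ' := by
  simp only [bk, mQ, mQ', v4, Eij, sub_mul, mul_sub, add_mul, mul_add, std_mul]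
  simp (config := { decide := true }) only [ite_true, ite_false, reduceIte]
  abel
lemma bkmem_3_7 : bk v4 mQ ∈ mm := by rw [bkid_3_7]; exact neg_mem hmmQp

lemma bkid_3_8 : bk v4 mR = -mR' := by
  simp only [bk, mR, mR', v4, Eij, sub_mul, mul_sub, add_mul, mul_add, std_mul]
  simp (config := { decide := true }) only [ite_true, ite_false, reduceIte]
  abel
lemma bkmem_3_8 : bk v4 mR ∈ mm := by rw [bkid_3_8]; exact neg_mem hmmRp

lemma bkid_3_9 : bk v4 mP' = (0 : M7) := by
  simp only [bk, mP', v4, Eij, sub_mul, mul_sub, add_mul, mul_add, std_mul]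
  simp (config := { decide := true }) only [ite_true, ite_false, reduceIte]
  abel
lemma bkmem_3_9 : bk v4 mP' ∈ mm := by rw [bkid_3_9]; exact zero_mem _

lemma bkid_3_10 : bk v4 mQ' = mQ := by
  simp only [bk, mQ, mQ', v4, Eij, sub_mul, mul_sub, add_mul, mul_add, std_mul]
  simp (config := { decide := true }) only [ite_true, ite_false, reduceIte]
  abel
lemma bkmem_3_10 : bk v4 mQ' ∈ mm := by rw [bkid_3_10]; exact hmmQ

lemma bkid_3_11 : bk v4 mR' = mR := by
  simp only [bk, mR, mR', v4, Eij, sub_mul, mul_sub, add_mul, mul_add, std_mul]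
  simp (config := { decide := true }) only [ite_true, ite_false, reduceIte]
  abel
lemma bkmem_3_11 : bk v4 mR' ∈ mm := by rw [bkid_3_11]; exact hmmR

lemma bkid_4_0 : bk v5 mA = (0 : M7) := by
  simp only [bk, mA, v5, Eij, sub_mul, mul_sub, add_mul, mul_add, std_mul]
  simp (config := { decide := true }) only [ite_true, ite_false, reduceIte]
  abel
lemma bkmem_4_0 : bk v5 mA ∈ mm := by rw [bkid_4_0]; exact zero_mem _

lemma bkid_4_1 : bk v5 mB = -mB' := by
  simp only [bk, mB, mB', v5, Eij, sub_mul, mul_sub, add_mul, mul_add, std_mul]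
  simp (config := { decide := true }) only [ite_true, ite_false, reduceIte]
  abel
lemma bkmem_4_1 : bk v5 mB ∈ mm := by rw [bkid_4_1]; exact neg_mem hmmBp

lemma bkid_4_2 : bk v5 mC = (0 : M7) := by
  simp only [bk, mC, v5, Eij, sub_mul, mul_sub, add_mul, mul_add, std_mul]
  simp (config := { decide := true }) only [ite_true, ite_false, reduceIte]
  abel
lemma bkmem_4_2 : bk v5 mC ∈ mm := by rw [bkid_4_2]; exact zero_mem _

lemma bkid_4_3 : bk v5 mA' = (0 : M7) := by
  simp only [bk, mA', v5, Eij, sub_mul, mul_sub, add_mul, mul_add, std_mul]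
  simp (config := { decide := true }) only [ite_true, ite_false, reduceIte]
  abel
lemma bkmem_4_3 : bk v5 mA' ∈ mm := by rw [bkid_4_3]; exact zero_mem _

lemma bkid_4_4 : bk v5 mB' = mB := by
  simp only [bk, mB, mB', v5, Eij, sub_mul, mul_sub, add_mul, mul_add, std_mul]
  simp (config := { decide := true }) only [ite_true, ite_false, reduceIte]
  abel
lemma bkmem_4_4 : bk v5 mB' ∈ mm := by rw [bkid_4_4]; exact hmmB

lemma bkid_4_5 : bk v5 mC' = (0 : M7) := by
  simp only [bk, mC', v5, Eij, sub_mul, mul_sub, add_mul, mul_add, std_mul]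
  simp (config := { decide := true }) only [ite_true, ite_false, reduceIte]
  abel
lemma bkmem_4_5 : bk v5 mC' ∈ mm := by rw [bkid_4_5]; exact zero_mem _

lemma bkid_4_6 : bk v5 mP = -mP' := by
  simp only [bk, mP, mP', v5, Eij, sub_mul, mul_sub, add_mul, mul_add, std_mul]
  simp (config := { decide := true }) only [ite_true, ite_false, reduceIte]
  abel
lemma bkmem_4_6 : bk v5 mP ∈ mm := by rw [bkid_4_6]; exact neg_mem hmmPp

lemma bkid_4_7 : bk v5 mQ = (0 : M7) := by
  simp only [bk, mQ, v5, Eij, sub_mul, mul_sub, add_mul, mul_add, std_mul]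
  simp (config := { decide := true }) only [ite_true, ite_false, reduceIte]
  abel
lemma bkmem_4_7 : bk v5 mQ ∈ mm := by rw [bkid_4_7]; exact zero_mem _

lemma bkid_4_8 : bk v5 mR = -mR' := by
  simp only [bk, mR, mR', v5, Eij, sub_mul, mul_sub, add_mul, mul_add, std_mul]
  simp (config := { decide := true }) only [ite_true, ite_false, reduceIte]
  abel
lemma bkmem_4_8 : bk v5 mR ∈ mm := by rw [bkid_4_8]; exact neg_mem hmmRp

lemma bkid_4_9 : bk v5 mP' = mP := by
  simp only [bk, mP, mP', v5, Eij, sub_mul, mul_sub, add_mul, mul_add, std_mul]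
  simp (config := { decide := true }) only [ite_true, ite_false, reduceIte]
  abel
lemma bkmem_4_9 : bk v5 mP' ∈ mm := by rw [bkid_4_9]; exact hmmP

lemma bkid_4_10 : bk v5 mQ' = (0 : M7) := by
  simp only [bk, mQ', v5, Eij, sub_mul, mul_sub, add_mul, mul_add, std_mul]
  simp (config := { decide := true }) only [ite_true, ite_false, reduceIte]
  abel
lemma bkmem_4_10 : bk v5 mQ' ∈ mm := by rw [bkid_4_10]; exact zero_mem _

lemma bkid_4_11 : bk v5 mR' = mR := by
  simp only [bk, mR, mR', v5, Eij, sub_mul, mul_sub, add_mul, mul_add, std_mul]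
  simp (config := { decide := true }) only [ite_true, ite_false, reduceIte]
  abel
lemma bkmem_4_11 : bk v5 mR' ∈ mm := by rw [bkid_4_11]; exact hmmR

lemma bkid_5_0 : bk v6 mA = (0 : M7) := by
  simp only [bk, mA, v6, Eij, sub_mul, mul_sub, add_mul, mul_add, std_mul]
  simp (config := { decide := true }) only [ite_true, ite_false, reduceIte]
  abel
lemma bkmem_5_0 : bk v6 mA ∈ mm := by rw [bkid_5_0]; exact zero_mem _

lemma bkid_5_1 : bk v6 mB = (0 : M7) := by
  simp only [bk, mB, v6, Eij, sub_mul, mul_sub, add_mul, mul_add, std_mul]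
  simp (config := { decide := true }) only [ite_true, ite_false, reduceIte]
  abel
lemma bkmem_5_1 : bk v6 mB ∈ mm := by rw [bkid_5_1]; exact zero_mem _

lemma bkid_5_2 : bk v6 mC = -mC' := by
  simp only [bk, mC, mC', v6, Eij, sub_mul, mul_sub, add_mul, mul_add, std_mul]
  simp (config := { decide := true }) only [ite_true, ite_false, reduceIte]
  abel
lemma bkmem_5_2 : bk v6 mC ∈ mm := by rw [bkid_5_2]; exact neg_mem hmmCp

lemma bkid_5_3 : bk v6 mA' = (0 : M7) := by
  simp only [bk, mA', v6, Eij, sub_mul, mul_sub, add_mul, mul_add, std_mul]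
  simp (config := { decide := true }) only [ite_true, ite_false, reduceIte]
  abel
lemma bkmem_5_3 : bk v6 mA' ∈ mm := by rw [bkid_5_3]; exact zero_mem _

lemma bkid_5_4 : bk v6 mB' = (0 : M7) := by
  simp only [bk, mB', v6, Eij, sub_mul, mul_sub, add_mul, mul_add, std_mul]
  simp (config := { decide := true }) only [ite_true, ite_false, reduceIte]
  abel
lemma bkmem_5_4 : bk v6 mB' ∈ mm := by rw [bkid_5_4]; exact zero_mem _

lemma bkid_5_5 : bk v6 mC' = mC := by
  simp only [bk, mC, mC', v6, Eij, sub_mul, mul_sub, add_mul, mul_add, std_mul]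
  simp (config := { decide := true }) only [ite_true, ite_false, reduceIte]
  abel
lemma bkmem_5_5 : bk v6 mC' ∈ mm := by rw [bkid_5_5]; exact hmmC

lemma bkid_5_6 : bk v6 mP = -mP' := by
  simp only [bk, mP, mP', v6, Eij, sub_mul, mul_sub, add_mul, mul_add, std_mul]
  simp (config := { decide := true }) only [ite_true, ite_false, reduceIte]
  abel
lemma bkmem_5_6 : bk v6 mP ∈ mm := by rw [bkid_5_6]; exact neg_mem hmmPp

lemma bkid_5_7 : bk v6 mQ = -mQ' := by
  simp only [bk, mQ, mQ', v6, Eij, sub_mul, mul_sub, add_mul, mul_add, std_mul]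
  simp (config := { decide := true }) only [ite_true, ite_false, reduceIte]
  abel
lemma bkmem_5_7 : bk v6 mQ ∈ mm := by rw [bkid_5_7]; exact neg_mem hmmQp

lemma bkid_5_8 : bk v6 mR = (0 : M7) := by
  simp only [bk, mR, v6, Eij, sub_mul, mul_sub, add_mul, mul_add, std_mul]
  simp (config := { decide := true }) only [ite_true, ite_false, reduceIte]
  abel
lemma bkmem_5_8 : bk v6 mR ∈ mm := by rw [bkid_5_8]; exact zero_mem _

lemma bkid_5_9 : bk v6 mP' = mP := by
  simp only [bk, mP, mP', v6, Eij, sub_mul, mul_sub, add_mul, mul_add, std_mul]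
  simp (config := { decide := true }) only [ite_true, ite_false, reduceIte]
  abel
lemma bkmem_5_9 : bk v6 mP' ∈ mm := by rw [bkid_5_9]; exact hmmP

lemma bkid_5_10 : bk v6 mQ' = mQ := by
  simp only [bk, mQ, mQ', v6, Eij, sub_mul, mul_sub, add_mul, mul_add, std_mul]
  simp (config := { decide := true }) only [ite_true, ite_false, reduceIte]
  abel
lemma bkmem_5_10 : bk v6 mQ' ∈ mm := by rw [bkid_5_10]; exact hmmQ

lemma bkid_5_11 : bk v6 mR' = (0 : M7) := by
  simp only [bk, mR', v6, Eij, sub_mul, mul_sub, add_mul, mul_add, std_mul]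
  simp (config := { decide := true }) only [ite_true, ite_false, reduceIte]
  abel
lemma bkmem_5_11 : bk v6 mR' ∈ mm := by rw [bkid_5_11]; exact zero_mem _

lemma bkid_6_0 : bk v7 mA = -mB' := by
  simp only [bk, mA, mB', v7, Eij, sub_mul, mul_sub, add_mul, mul_add, std_mul]
  simp (config := { decide := true }) only [ite_true, ite_false, reduceIte]
  abel
lemma bkmem_6_0 : bk v7 mA ∈ mm := by rw [bkid_6_0]; exact neg_mem hmmBp

lemma bkid_6_1 : bk v7 mB = -mA' := by
  simp only [bk, mA', mB, v7, Eij, sub_mul, mul_sub, add_mul, mul_add, std_mul]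
  simp (config := { decide := true }) only [ite_true, ite_false, reduceIte]
  abel
lemma bkmem_6_1 : bk v7 mB ∈ mm := by rw [bkid_6_1]; exact neg_mem hmmAp

lemma bkid_6_2 : bk v7 mC = (0 : M7) := by
  simp only [bk, mC, v7, Eij, sub_mul, mul_sub, add_mul, mul_add, std_mul]
  simp (config := { decide := true }) only [ite_true, ite_false, reduceIte]
  abel
lemma bkmem_6_2 : bk v7 mC ∈ mm := by rw [bkid_6_2]; exact zero_mem _

lemma bkid_6_3 : bk v7 mA' = mB := by
  simp only [bk, mA', mB, v7, Eij, sub_mul, mul_sub, add_mul, mul_add, std_mul]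
  simp (config := { decide := true }) only [ite_true, ite_false, reduceIte]
  abel
lemma bkmem_6_3 : bk v7 mA' ∈ mm := by rw [bkid_6_3]; exact hmmB

lemma bkid_6_4 : bk v7 mB' = mA := by
  simp only [bk, mA, mB', v7, Eij, sub_mul, mul_sub, add_mul, mul_add, std_mul]
  simp (config := { decide := true }) only [ite_true, ite_false, reduceIte]
  abel
lemma bkmem_6_4 : bk v7 mB' ∈ mm := by rw [bkid_6_4]; exact hmmA

lemma bkid_6_5 : bk v7 mC' = (0 : M7) := by
  simp only [bk, mC', v7, Eij, sub_mul, mul_sub, add_mul, mul_add, std_mul]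
  simp (config := { decide := true }) only [ite_true, ite_false, reduceIte]
  abel
lemma bkmem_6_5 : bk v7 mC' ∈ mm := by rw [bkid_6_5]; exact zero_mem _

lemma bkid_6_6 : bk v7 mP = mQ' := by
  simp only [bk, mP, mQ', v7, Eij, sub_mul, mul_sub, add_mul, mul_add, std_mul]
  simp (config := { decide := true }) only [ite_true, ite_false, reduceIte]
  abel
lemma bkmem_6_6 : bk v7 mP ∈ mm := by rw [bkid_6_6]; exact hmmQp

lemma bkid_6_7 : bk v7 mQ = mP' := by
  simp only [bk, mP', mQ, v7, Eij, sub_mul, mul_sub, add_mul, mul_add, std_mul]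
  simp (config := { decide := true }) only [ite_true, ite_false, reduceIte]
  abel
lemma bkmem_6_7 : bk v7 mQ ∈ mm := by rw [bkid_6_7]; exact hmmPp

lemma bkid_6_8 : bk v7 mR = (0 : M7) := by
  simp only [bk, mR, v7, Eij, sub_mul, mul_sub, add_mul, mul_add, std_mul]
  simp (config := { decide := true }) only [ite_true, ite_false, reduceIte]
  abel
lemma bkmem_6_8 : bk v7 mR ∈ mm := by rw [bkid_6_8]; exact zero_mem _

lemma bkid_6_9 : bk v7 mP' = -mQ := by
  simp only [bk, mP', mQ, v7, Eij, sub_mul, mul_sub, add_mul, mul_add, std_mul]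
  simp (config := { decide := true }) only [ite_true, ite_false, reduceIte]
  abel
lemma bkmem_6_9 : bk v7 mP' ∈ mm := by rw [bkid_6_9]; exact neg_mem hmmQ

lemma bkid_6_10 : bk v7 mQ' = -mP := by
  simp only [bk, mP, mQ', v7, Eij, sub_mul, mul_sub, add_mul, mul_add, std_mul]
  simp (config := { decide := true }) only [ite_true, ite_false, reduceIte]
  abel
lemma bkmem_6_10 : bk v7 mQ' ∈ mm := by rw [bkid_6_10]; exact neg_mem hmmP

lemma bkid_6_11 : bk v7 mR' = (0 : M7) := by
  simp only [bk, mR', v7, Eij, sub_mul, mul_sub, add_mul, mul_add, std_mul]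
  simp (config := { decide := true }) only [ite_true, ite_false, reduceIte]
  abel
lemma bkmem_6_11 : bk v7 mR' ∈ mm := by rw [bkid_6_11]; exact zero_mem _

lemma bkid_7_0 : bk v8 mA = -mC' := by
  simp only [bk, mA, mC', v8, Eij, sub_mul, mul_sub, add_mul, mul_add, std_mul]
  simp (config := { decide := true }) only [ite_true, ite_false, reduceIte]
  abel
lemma bkmem_7_0 : bk v8 mA ∈ mm := by rw [bkid_7_0]; exact neg_mem hmmCp

lemma bkid_7_1 : bk v8 mB = (0 : M7) := by
  simp only [bk, mB, v8, Eij, sub_mul, mul_sub, add_mul, mul_add, std_mul]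
  simp (config := { decide := true }) only [ite_true, ite_false, reduceIte]
  abel
lemma bkmem_7_1 : bk v8 mB ∈ mm := by rw [bkid_7_1]; exact zero_mem _

lemma bkid_7_2 : bk v8 mC = -mA' := by
  simp only [bk, mA', mC, v8, Eij, sub_mul, mul_sub, add_mul, mul_add, std_mul]
  simp (config := { decide := true }) only [ite_true, ite_false, reduceIte]
  abel
lemma bkmem_7_2 : bk v8 mC ∈ mm := by rw [bkid_7_2]; exact neg_mem hmmAp

lemma bkid_7_3 : bk v8 mA' = mC := by
  simp only [bk, mA', mC, v8, Eij, sub_mul, mul_sub, add_mul, mul_add, std_mul]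
  simp (config := { decide := true }) only [ite_true, ite_false, reduceIte]
  abel
lemma bkmem_7_3 : bk v8 mA' ∈ mm := by rw [bkid_7_3]; exact hmmC

lemma bkid_7_4 : bk v8 mB' = (0 : M7) := by
  simp only [bk, mB', v8, Eij, sub_mul, mul_sub, add_mul, mul_add, std_mul]
  simp (config := { decide := true }) only [ite_true, ite_false, reduceIte]
  abel
lemma bkmem_7_4 : bk v8 mB' ∈ mm := by rw [bkid_7_4]; exact zero_mem _

lemma bkid_7_5 : bk v8 mC' = mA := by
  simp only [bk, mA, mC', v8, Eij, sub_mul, mul_sub, add_mul, mul_add, std_mul]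
  simp (config := { decide := true }) only [ite_true, ite_false, reduceIte]
  abel
lemma bkmem_7_5 : bk v8 mC' ∈ mm := by rw [bkid_7_5]; exact hmmA

lemma bkid_7_6 : bk v8 mP = mR' := by
  simp only [bk, mP, mR', v8, Eij, sub_mul, mul_sub, add_mul, mul_add, std_mul]
  simp (config := { decide := true }) only [ite_true, ite_false, reduceIte]
  abel
lemma bkmem_7_6 : bk v8 mP ∈ mm := by rw [bkid_7_6]; exact hmmRp

lemma bkid_7_7 : bk v8 mQ = (0 : M7) := by
  simp only [bk, mQ, v8, Eij, sub_mul, mul_sub, add_mul, mul_add, std_mul]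
  simp (config := { decide := true }) only [ite_true, ite_false, reduceIte]
  abel
lemma bkmem_7_7 : bk v8 mQ ∈ mm := by rw [bkid_7_7]; exact zero_mem _

lemma bkid_7_8 : bk v8 mR = mP' := by
  simp only [bk, mP', mR, v8, Eij, sub_mul, mul_sub, add_mul, mul_add, std_mul]
  simp (config := { decide := true }) only [ite_true, ite_false, reduceIte]
  abel
lemma bkmem_7_8 : bk v8 mR ∈ mm := by rw [bkid_7_8]; exact hmmPp

lemma bkid_7_9 : bk v8 mP' = -mR := by
  simp only [bk, mP', mR, v8, Eij, sub_mul, mul_sub, add_mul, mul_add, std_mul]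
  simp (config := { decide := true }) only [ite_true, ite_false, reduceIte]
  abel
lemma bkmem_7_9 : bk v8 mP' ∈ mm := by rw [bkid_7_9]; exact neg_mem hmmR

lemma bkid_7_10 : bk v8 mQ' = (0 : M7) := by
  simp only [bk, mQ', v8, Eij, sub_mul, mul_sub, add_mul, mul_add, std_mul]
  simp (config := { decide := true }) only [ite_true, ite_false, reduceIte]
  abel
lemma bkmem_7_10 : bk v8 mQ' ∈ mm := by rw [bkid_7_10]; exact zero_mem _

lemma bkid_7_11 : bk v8 mR' = -mP := by
  simp only [bk, mP, mR', v8, Eij, sub_mul, mul_sub, add_mul, mul_add, std_mul]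
  simp (config := { decide := true }) only [ite_true, ite_false, reduceIte]
  abel
lemma bkmem_7_11 : bk v8 mR' ∈ mm := by rw [bkid_7_11]; exact neg_mem hmmP

lemma bkid_8_0 : bk v9 mA = (0 : M7) := by
  simp only [bk, mA, v9, Eij, sub_mul, mul_sub, add_mul, mul_add, std_mul]
  simp (config := { decide := true }) only [ite_true, ite_false, reduceIte]
  abel
lemma bkmem_8_0 : bk v9 mA ∈ mm := by rw [bkid_8_0]; exact zero_mem _

lemma bkid_8_1 : bk v9 mB = -mC' := by
  simp only [bk, mB, mC', v9, Eij, sub_mul, mul_sub, add_mul, mul_add, std_mul]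
  simp (config := { decide := true }) only [ite_true, ite_false, reduceIte]
  abel
lemma bkmem_8_1 : bk v9 mB ∈ mm := by rw [bkid_8_1]; exact neg_mem hmmCp

lemma bkid_8_2 : bk v9 mC = -mB' := by
  simp only [bk, mB', mC, v9, Eij, sub_mul, mul_sub, add_mul, mul_add, std_mul]
  simp (config := { decide := true }) only [ite_true, ite_false, reduceIte]
  abel
lemma bkmem_8_2 : bk v9 mC ∈ mm := by rw [bkid_8_2]; exact neg_mem hmmBp

lemma bkid_8_3 : bk v9 mA' = (0 : M7) := by
  simp only [bk, mA', v9, Eij, sub_mul, mul_sub, add_mul, mul_add, std_mul]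
  simp (config := { decide := true }) only [ite_true, ite_false, reduceIte]
  abel
lemma bkmem_8_3 : bk v9 mA' ∈ mm := by rw [bkid_8_3]; exact zero_mem _

lemma bkid_8_4 : bk v9 mB' = mC := by
  simp only [bk, mB', mC, v9, Eij, sub_mul, mul_sub, add_mul, mul_add, std_mul]
  simp (config := { decide := true }) only [ite_true, ite_false, reduceIte]
  abel
lemma bkmem_8_4 : bk v9 mB' ∈ mm := by rw [bkid_8_4]; exact hmmC

lemma bkid_8_5 : bk v9 mC' = mB := by
  simp only [bk, mB, mC', v9, Eij, sub_mul, mul_sub, add_mul, mul_add, std_mul]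
  simp (config := { decide := true }) only [ite_true, ite_false, reduceIte]
  abel
lemma bkmem_8_5 : bk v9 mC' ∈ mm := by rw [bkid_8_5]; exact hmmB

lemma bkid_8_6 : bk v9 mP = (0 : M7) := by
  simp only [bk, mP, v9, Eij, sub_mul, mul_sub, add_mul, mul_add, std_mul]
  simp (config := { decide := true }) only [ite_true, ite_false, reduceIte]
  abel
lemma bkmem_8_6 : bk v9 mP ∈ mm := by rw [bkid_8_6]; exact zero_mem _

lemma bkid_8_7 : bk v9 mQ = mR' := by
  simp only [bk, mQ, mR', v9, Eij, sub_mul, mul_sub, add_mul, mul_add, std_mul]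
  simp (config := { decide := true }) only [ite_true, ite_false, reduceIte]
  abel
lemma bkmem_8_7 : bk v9 mQ ∈ mm := by rw [bkid_8_7]; exact hmmRp

lemma bkid_8_8 : bk v9 mR = mQ' := by
  simp only [bk, mQ', mR, v9, Eij, sub_mul, mul_sub, add_mul, mul_add, std_mul]
  simp (config := { decide := true }) only [ite_true, ite_false, reduceIte]
  abel
lemma bkmem_8_8 : bk v9 mR ∈ mm := by rw [bkid_8_8]; exact hmmQp

lemma bkid_8_9 : bk v9 mP' = (0 : M7) := by
  simp only [bk, mP', v9, Eij, sub_mul, mul_sub, add_mul, mul_add, std_mul]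
  simp (config := { decide := true }) only [ite_true, ite_false, reduceIte]
  abel
lemma bkmem_8_9 : bk v9 mP' ∈ mm := by rw [bkid_8_9]; exact zero_mem _

lemma bkid_8_10 : bk v9 mQ' = -mR := by
  simp only [bk, mQ', mR, v9, Eij, sub_mul, mul_sub, add_mul, mul_add, std_mul]
  simp (config := { decide := true }) only [ite_true, ite_false, reduceIte]
  abel
lemma bkmem_8_10 : bk v9 mQ' ∈ mm := by rw [bkid_8_10]; exact neg_mem hmmR

lemma bkid_8_11 : bk v9 mR' = -mQ := by
  simp only [bk, mQ, mR', v9, Eij, sub_mul, mul_sub, add_mul, mul_add, std_mul]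
  simp (config := { decide := true }) only [ite_true, ite_false, reduceIte]
  abel
lemma bkmem_8_11 : bk v9 mR' ∈ mm := by rw [bkid_8_11]; exact neg_mem hmmQ

lemma bk_basis_mem (v : M7)
    (hv : v = v1 ∨ v = v2 ∨ v = v3 ∨ v = v4 ∨ v = v5 ∨ v = v6 ∨ v = v7 ∨ v = v8 ∨ v = v9) :
    ∀ X ∈ mm, bk v X ∈ mm := by
  intro X hX
  induction hX using Submodule.span_induction with
  | mem y hy =>
    simp only [Set.mem_insert_iff, Set.mem_singleton_iff] at hy
    rcases hv with rfl|rfl|rfl|rfl|rfl|rfl|rfl|rfl|rfl <;>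
      rcases hy with rfl|rfl|rfl|rfl|rfl|rfl|rfl|rfl|rfl|rfl|rfl|rfl
    exacts [bkmem_0_0, bkmem_0_1, bkmem_0_2, bkmem_0_3, bkmem_0_4, bkmem_0_5, bkmem_0_6, bkmem_0_7, bkmem_0_8, bkmem_0_9, bkmem_0_10, bkmem_0_11, bkmem_1_0, bkmem_1_1, bkmem_1_2, bkmem_1_3, bkmem_1_4, bkmem_1_5, bkmem_1_6, bkmem_1_7, bkmem_1_8, bkmem_1_9, bkmem_1_10, bkmem_1_11, bkmem_2_0, bkmem_2_1, bkmem_2_2, bkmem_2_3, bkmem_2_4, bkmem_2_5, bkmem_2_6, bkmem_2_7, bkmem_2_8, bkmem_2_9, bkmem_2_10, bkmem_2_11, bkmem_3_0, bkmem_3_1, bkmem_3_2, bkmem_3_3, bkmem_3_4, bkmem_3_5, bkmem_3_6, bkmem_3_7, bkmem_3_8, bkmem_3_9, bkmem_3_10, bkmem_3_11, bkmem_4_0, bkmem_4_1, bkmem_4_2, bkmem_4_3, bkmem_4_4, bkmem_4_5, bkmem_4_6, bkmem_4_7, bkmem_4_8, bkmem_4_9, bkmem_4_10, bkmem_4_11,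 bkmem_5_0, bkmem_5_1, bkmem_5_2, bkmem_5_3, bkmem_5_4, bkmem_5_5, bkmem_5_6, bkmem_5_7, bkmem_5_8, bkmem_5_9, bkmem_5_10, bkmem_5_11, bkmem_6_0, bkmem_6_1, bkmem_6_2, bkmem_6_3, bkmem_6_4, bkmem_6_5, bkmem_6_6, bkmem_6_7, bkmem_6_8, bkmem_6_9, bkmem_6_10, bkmem_6_11, bkmem_7_0, bkmem_7_1, bkmem_7_2, bkmem_7_3, bkmem_7_4, bkmem_7_5, bkmem_7_6, bkmem_7_7, bkmem_7_8, bkmem_7_9, bkmem_7_10, bkmem_7_11, bkmem_8_0, bkmem_8_1, bkmem_8_2, bkmem_8_3, bkmem_8_4, bkmem_8_5, bkmem_8_6, bkmem_8_7, bkmem_8_8, bkmem_8_9, bkmem_8_10, bkmem_8_11]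
  | zero => simp only [bk, Matrix.mul_zero, Matrix.zero_mul, sub_zero]; exact zero_mem _
  | add a b _ _ iha ihb => rw [bk_addr]; exact add_mem iha ihb
  | smul c a _ iha => rw [bk_smulr]; exact Submodule.smul_mem _ _ iha

lemma vmem1 : v1 ∈ u3 := by
  refine ⟨?_, ?_, ?_⟩
  · simp only [v1, Matrix.transpose_add, Eij_skew]
    try abel
  · funext i
    simp (config := { decide := true }) [Matrix.mulVec, dotProduct, e0,
      Fin.sum_univ_seven, v1, Matrix.add_apply, Eij_apply]
  · simp only [v1, mE, Eij, sub_mul, mul_sub, add_mul, mul_add, std_mul]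
    simp (config := { decide := true }) only [ite_true, ite_false, reduceIte]
    abel

lemma vmem2 : v2 ∈ u3 := by
  refine ⟨?_, ?_, ?_⟩
  · simp only [v2, Matrix.transpose_add, Eij_skew]
    try abel
  · funext i
    simp (config := { decide := true }) [Matrix.mulVec, dotProduct, e0,
      Fin.sum_univ_seven, v2, Matrix.add_apply, Eij_apply]
  · simp only [v2, mE, Eij, sub_mul, mul_sub, add_mul, mul_add, std_mul]
    simp (config := { decide := true }) only [ite_true, ite_false, reduceIte]
    abel

lemma vmem3 : v3 ∈ u3 := by
  refine ⟨?_, ?_, ?_⟩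
  · simp only [v3, Matrix.transpose_add, Eij_skew]
    try abel
  · funext i
    simp (config := { decide := true }) [Matrix.mulVec, dotProduct, e0,
      Fin.sum_univ_seven, v3, Matrix.add_apply, Eij_apply]
  · simp only [v3, mE, Eij, sub_mul, mul_sub, add_mul, mul_add, std_mul]
    simp (config := { decide := true }) only [ite_true, ite_false, reduceIte]
    abel

lemma vmem4 : v4 ∈ u3 := by
  refine ⟨?_, ?_, ?_⟩
  · simp only [v4, Matrix.transpose_add, Eij_skew]
    try abel
  · funext i
    simp (config := { decide := true }) [Matrix.mulVec, dotProduct, e0,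
      Fin.sum_univ_seven, v4, Matrix.add_apply, Eij_apply]
  · simp only [v4, mE, Eij, sub_mul, mul_sub, add_mul, mul_add, std_mul]
    simp (config := { decide := true }) only [ite_true, ite_false, reduceIte]
    abel

lemma vmem5 : v5 ∈ u3 := by
  refine ⟨?_, ?_, ?_⟩
  · simp only [v5, Matrix.transpose_add, Eij_skew]
    try abel
  · funext i
    simp (config := { decide := true }) [Matrix.mulVec, dotProduct, e0,
      Fin.sum_univ_seven, v5, Matrix.add_apply, Eij_apply]
  · simp only [v5, mE, Eij, sub_mul, mul_sub, add_mul, mul_add, std_mul]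
    simp (config := { decide := true }) only [ite_true, ite_false, reduceIte]
    abel

lemma vmem6 : v6 ∈ u3 := by
  refine ⟨?_, ?_, ?_⟩
  · simp only [v6, Matrix.transpose_add, Eij_skew]
    try abel
  · funext i
    simp (config := { decide := true }) [Matrix.mulVec, dotProduct, e0,
      Fin.sum_univ_seven, v6, Matrix.add_apply, Eij_apply]
  · simp only [v6, mE, Eij, sub_mul, mul_sub, add_mul, mul_add, std_mul]
    simp (config := { decide := true }) only [ite_true, ite_false, reduceIte]
    abel

lemma vmem7 : v7 ∈ u3 := by
  refine ⟨?_, ?_, ?_⟩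
  · simp only [v7, Matrix.transpose_add, Eij_skew]
    try abel
  · funext i
    simp (config := { decide := true }) [Matrix.mulVec, dotProduct, e0,
      Fin.sum_univ_seven, v7, Matrix.add_apply, Eij_apply]
  · simp only [v7, mE, Eij, sub_mul, mul_sub, add_mul, mul_add, std_mul]
    simp (config := { decide := true }) only [ite_true, ite_false, reduceIte]
    abel

lemma vmem8 : v8 ∈ u3 := by
  refine ⟨?_, ?_, ?_⟩
  · simp only [v8, Matrix.transpose_add, Eij_skew]
    try abel
  · funext i
    simp (config := { decide := true }) [Matrix.mulVec, dotProduct, e0,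
      Fin.sum_univ_seven, v8, Matrix.add_apply, Eij_apply]
  · simp only [v8, mE, Eij, sub_mul, mul_sub, add_mul, mul_add, std_mul]
    simp (config := { decide := true }) only [ite_true, ite_false, reduceIte]
    abel

lemma vmem9 : v9 ∈ u3 := by
  refine ⟨?_, ?_, ?_⟩
  · simp only [v9, Matrix.transpose_add, Eij_skew]
    try abel
  · funext i
    simp (config := { decide := true }) [Matrix.mulVec, dotProduct, e0,
      Fin.sum_univ_seven, v9, Matrix.add_apply, Eij_apply]
  · simp only [v9, mE, Eij, sub_mul, mul_sub, add_mul, mul_add, std_mul]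
    simp (config := { decide := true }) only [ite_true, ite_false, reduceIte]
    abel

end Brk

noncomputable section Final

lemma Uproj_mem (X : M7) : Uproj X ∈ u3 := by
  simp only [Uproj]
  exact u3_add _ (u3_add _ (u3_add _ (u3_add _ (u3_add _ (u3_add _ (u3_add _ (u3_add _
    (u3_smul _ _ vmem1) _ (u3_smul _ _ vmem2)) _ (u3_smul _ _ vmem3)) _
    (u3_smul _ _ vmem4)) _ (u3_smul _ _ vmem5)) _ (u3_smul _ _ vmem6)) _
    (u3_smul _ _ vmem7)) _ (u3_smul _ _ vmem8)) _ (u3_smul _ _ vmem9)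

lemma so7_decomp : ∀ X ∈ so7, ∃ Y ∈ mm, ∃ Z ∈ u3, X = Y + Z := by
  intro X hX
  exact ⟨Lproj X, Lproj_mem X, Uproj X, Uproj_mem X, skew_decomp hX⟩

lemma u3_mm_bk : ∀ W ∈ u3, ∀ X ∈ mm, bk W X ∈ mm := by
  intro W hW X hX
  have hd : W = Uproj W := by
    have h := skew_decomp hW.1
    rwa [Lproj_u3 hW, zero_add] at h
  rw [hd]
  simp only [Uproj, bk_addl, bk_smull]
  have m1 := bk_basis_mem v1 (by tauto) X hX
  have m2 := bk_basis_mem v2 (by tauto) X hX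
  have m3 := bk_basis_mem v3 (by tauto) X hX
  have m4 := bk_basis_mem v4 (by tauto) X hX
  have m5 := bk_basis_mem v5 (by tauto) X hX
  have m6 := bk_basis_mem v6 (by tauto) X hX
  have m7 := bk_basis_mem v7 (by tauto) X hX
  have m8 := bk_basis_mem v8 (by tauto) X hX
  have m9 := bk_basis_mem v9 (by tauto) X hX
  exact add_mem (add_mem (add_mem (add_mem (add_mem (add_mem (add_mem (add_mem
    (Submodule.smul_mem _ _ m1) (Submodule.smul_mem _ _ m2)) (Submodule.smul_mem _ _ m3))
    (Submodule.smul_mem _ _ m4)) (Submodule.smul_mem _ _ m5)) (Submodule.smul_mem _ _ m6))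
    (Submodule.smul_mem _ _ m7)) (Submodule.smul_mem _ _ m8)) (Submodule.smul_mem _ _ m9)

end Final

/-- 𝔲(3) is a Lie subalgebra of 𝔰𝔬(7), 𝔰𝔬(7) = 𝔪 ⊕ 𝔲(3), and [𝔲(3), 𝔪] ⊆ 𝔪. -/
theorem stmt0 :
    -- 𝔲(3) is a Lie subalgebra of 𝔰𝔬(7):
    ((0 : M7) ∈ u3) ∧
    (∀ X ∈ u3, ∀ Y ∈ u3, X + Y ∈ u3) ∧
    (∀ (t : ℝ), ∀ X ∈ u3, t • X ∈ u3) ∧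
    (∀ X ∈ u3, ∀ Y ∈ u3, bk X Y ∈ u3) ∧
    (u3 ⊆ so7) ∧
    -- direct sum decomposition 𝔰𝔬(7) = 𝔪 ⊕ 𝔲(3):
    ((mm : Set M7) ⊆ so7) ∧
    (∀ X ∈ so7, ∃ Y ∈ mm, ∃ Z ∈ u3, X = Y + Z) ∧
    (∀ X : M7, X ∈ mm → X ∈ u3 → X = 0) ∧
    -- 𝔪 is invariant under the adjoint action of 𝔲(3):
    (∀ W ∈ u3, ∀ X ∈ mm, bk W X ∈ mm) := by
  exact ⟨u3_zero, u3_add, u3_smul, u3_bk, u3_sub_so7, mm_sub_so7, so7_decomp, mm_inter_u3, u3_mm_bk⟩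
end

section
/- For λ, μ > 0 with λμ = 1, the bilinear form g is compatible with I, J, K: for every T ∈ {I, J, K} and all X, Y ∈ 𝔪 one has g(TX, TY) = g(X, Y); moreover ω_I(X,Y) = g(X, IY), ω_J(X,Y) = g(X, JY) and ω_K(X,Y) = g(X, KY) for all X, Y ∈ 𝔪. -/
/-!
Common setup: 𝔤 = 𝔰𝔬(7) realised as real skew-symmetric 7×7 matrices with
bracket `bk X Y = X*Y - Y*X`; the matrices A, B, C, A', B', C', P, Q, R, P', Q', R', E;
the subspaces 𝔪 (`mm`) and 𝔲(3) (`u3`); the dual functionals a, …, r' (written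
`fa, …, fr'`), given by the explicit formulas that characterise them as the unique
linear functionals on 𝔰𝔬(7) vanishing on 𝔲(3) whose restrictions to 𝔪 are dual to
the chosen basis; the invariant forms; the endomorphisms I, J, K; and the
Chevalley–Eilenberg differentials `dM1`, `dM2` restricted to 𝔪.
-/

open Matrix

noncomputable section
lemma fa_Iop (X : M7) : fa (Iop X) = -fa' X := by
  simp [Iop, Jop, Kop, fa, fb, fc, fa', fb', fc', fp, fq, fr, fp', fq', fr', mA, mB, mC, mA', mB', mC', mP, mQ, mR, mP', mQ', mR', Eij, Matrix.smul_apply, Matrix.sub_apply, Matrix.add_apply, Matrix.single, Matrix.of_apply]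
  try ring

lemma fb_Iop (X : M7) : fb (Iop X) = -fb' X := by
  simp [Iop, Jop, Kop, fa, fb, fc, fa', fb', fc', fp, fq, fr, fp', fq', fr', mA, mB, mC, mA', mB', mC', mP, mQ, mR, mP', mQ', mR', Eij, Matrix.smul_apply, Matrix.sub_apply, Matrix.add_apply, Matrix.single, Matrix.of_apply]
  try ring

lemma fc_Iop (X : M7) : fc (Iop X) = -fc' X := by
  simp [Iop, Jop, Kop, fa, fb, fc, fa', fb', fc', fp, fq, fr, fp', fq', fr', mA, mB, mC, mA', mB', mC', mP, mQ, mR, mP', mQ', mR', Eij, Matrix.smul_apply, Matrix.sub_apply, Matrix.add_apply, Matrix.single, Matrix.of_apply]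
  try ring

lemma fap_Iop (X : M7) : fa' (Iop X) = fa X := by
  simp [Iop, Jop, Kop, fa, fb, fc, fa', fb', fc', fp, fq, fr, fp', fq', fr', mA, mB, mC, mA', mB', mC', mP, mQ, mR, mP', mQ', mR', Eij, Matrix.smul_apply, Matrix.sub_apply, Matrix.add_apply, Matrix.single, Matrix.of_apply]
  try ring

lemma fbp_Iop (X : M7) : fb' (Iop X) = fb X := by
  simp [Iop, Jop, Kop, fa, fb, fc, fa', fb', fc', fp, fq, fr, fp', fq', fr', mA, mB, mC, mA', mB', mC', mP, mQ, mR, mP', mQ', mR', Eij, Matrix.smul_apply, Matrix.sub_apply, Matrix.add_apply, Matrix.single, Matrix.of_apply]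
  try ring

lemma fcp_Iop (X : M7) : fc' (Iop X) = fc X := by
  simp [Iop, Jop, Kop, fa, fb, fc, fa', fb', fc', fp, fq, fr, fp', fq', fr', mA, mB, mC, mA', mB', mC', mP, mQ, mR, mP', mQ', mR', Eij, Matrix.smul_apply, Matrix.sub_apply, Matrix.add_apply, Matrix.single, Matrix.of_apply]
  try ring

lemma fp_Iop (X : M7) : fp (Iop X) = -fp' X := by
  simp [Iop, Jop, Kop, fa, fb, fc, fa', fb', fc', fp, fq, fr, fp', fq', fr', mA, mB, mC, mA', mB', mC', mP, mQ, mR, mP', mQ', mR', Eij, Matrix.smul_apply, Matrix.sub_apply, Matrix.add_apply, Matrix.single, Matrix.of_apply]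
  try ring

lemma fq_Iop (X : M7) : fq (Iop X) = -fq' X := by
  simp [Iop, Jop, Kop, fa, fb, fc, fa', fb', fc', fp, fq, fr, fp', fq', fr', mA, mB, mC, mA', mB', mC', mP, mQ, mR, mP', mQ', mR', Eij, Matrix.smul_apply, Matrix.sub_apply, Matrix.add_apply, Matrix.single, Matrix.of_apply]
  try ring

lemma fr_Iop (X : M7) : fr (Iop X) = -fr' X := by
  simp [Iop, Jop, Kop, fa, fb, fc, fa', fb', fc', fp, fq, fr, fp', fq', fr', mA, mB, mC, mA', mB', mC', mP, mQ, mR, mP', mQ', mR', Eij, Matrix.smul_apply, Matrix.sub_apply, Matrix.add_apply, Matrix.single, Matrix.of_apply]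
  try ring

lemma fpp_Iop (X : M7) : fp' (Iop X) = fp X := by
  simp [Iop, Jop, Kop, fa, fb, fc, fa', fb', fc', fp, fq, fr, fp', fq', fr', mA, mB, mC, mA', mB', mC', mP, mQ, mR, mP', mQ', mR', Eij, Matrix.smul_apply, Matrix.sub_apply, Matrix.add_apply, Matrix.single, Matrix.of_apply]
  try ring

lemma fqp_Iop (X : M7) : fq' (Iop X) = fq X := by
  simp [Iop, Jop, Kop, fa, fb, fc, fa', fb', fc', fp, fq, fr, fp', fq', fr', mA, mB, mC, mA', mB', mC', mP, mQ, mR, mP', mQ', mR', Eij, Matrix.smul_apply, Matrix.sub_apply, Matrix.add_apply, Matrix.single, Matrix.of_apply]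
  try ring

lemma frp_Iop (X : M7) : fr' (Iop X) = fr X := by
  simp [Iop, Jop, Kop, fa, fb, fc, fa', fb', fc', fp, fq, fr, fp', fq', fr', mA, mB, mC, mA', mB', mC', mP, mQ, mR, mP', mQ', mR', Eij, Matrix.smul_apply, Matrix.sub_apply, Matrix.add_apply, Matrix.single, Matrix.of_apply]
  try ring

lemma fa_Jop (lm mu : ℝ) (X : M7) : fa (Jop lm mu X) = -(mu * fp X) := by
  simp [Iop, Jop, Kop, fa, fb, fc, fa', fb', fc', fp, fq, fr, fp', fq', fr', mA, mB, mC, mA', mB', mC', mP, mQ, mR, mP', mQ', mR', Eij, Matrix.smul_apply, Matrix.sub_apply, Matrix.add_apply, Matrix.single, Matrix.of_apply]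
  try ring

lemma fb_Jop (lm mu : ℝ) (X : M7) : fb (Jop lm mu X) = -(mu * fq X) := by
  simp [Iop, Jop, Kop, fa, fb, fc, fa', fb', fc', fp, fq, fr, fp', fq', fr', mA, mB, mC, mA', mB', mC', mP, mQ, mR, mP', mQ', mR', Eij, Matrix.smul_apply, Matrix.sub_apply, Matrix.add_apply, Matrix.single, Matrix.of_apply]
  try ring

lemma fc_Jop (lm mu : ℝ) (X : M7) : fc (Jop lm mu X) = -(mu * fr X) := by
  simp [Iop, Jop, Kop, fa, fb, fc, fa', fb', fc', fp, fq, fr, fp', fq', fr', mA, mB, mC, mA', mB', mC', mP, mQ, mR, mP', mQ', mR', Eij, Matrix.smul_apply, Matrix.sub_apply, Matrix.add_apply, Matrix.single, Matrix.of_apply]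
  try ring

lemma fap_Jop (lm mu : ℝ) (X : M7) : fa' (Jop lm mu X) = mu * fp' X := by
  simp [Iop, Jop, Kop, fa, fb, fc, fa', fb', fc', fp, fq, fr, fp', fq', fr', mA, mB, mC, mA', mB', mC', mP, mQ, mR, mP', mQ', mR', Eij, Matrix.smul_apply, Matrix.sub_apply, Matrix.add_apply, Matrix.single, Matrix.of_apply]
  try ring

lemma fbp_Jop (lm mu : ℝ) (X : M7) : fb' (Jop lm mu X) = mu * fq' X := by
  simp [Iop, Jop, Kop, fa, fb, fc, fa', fb', fc', fp, fq, fr, fp', fq', fr', mA, mB, mC, mA', mB', mC', mP, mQ, mR, mP', mQ', mR', Eij, Matrix.smul_apply, Matrix.sub_apply, Matrix.add_apply, Matrix.single, Matrix.of_apply]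
  try ring

lemma fcp_Jop (lm mu : ℝ) (X : M7) : fc' (Jop lm mu X) = mu * fr' X := by
  simp [Iop, Jop, Kop, fa, fb, fc, fa', fb', fc', fp, fq, fr, fp', fq', fr', mA, mB, mC, mA', mB', mC', mP, mQ, mR, mP', mQ', mR', Eij, Matrix.smul_apply, Matrix.sub_apply, Matrix.add_apply, Matrix.single, Matrix.of_apply]
  try ring

lemma fp_Jop (lm mu : ℝ) (X : M7) : fp (Jop lm mu X) = lm * fa X := by
  simp [Iop, Jop, Kop, fa, fb, fc, fa', fb', fc', fp, fq, fr, fp', fq', fr', mA, mB, mC, mA', mB', mC', mP, mQ, mR, mP', mQ', mR', Eij, Matrix.smul_apply, Matrix.sub_apply, Matrix.add_apply, Matrix.single, Matrix.of_apply]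
  try ring

lemma fq_Jop (lm mu : ℝ) (X : M7) : fq (Jop lm mu X) = lm * fb X := by
  simp [Iop, Jop, Kop, fa, fb, fc, fa', fb', fc', fp, fq, fr, fp', fq', fr', mA, mB, mC, mA', mB', mC', mP, mQ, mR, mP', mQ', mR', Eij, Matrix.smul_apply, Matrix.sub_apply, Matrix.add_apply, Matrix.single, Matrix.of_apply]
  try ring

lemma fr_Jop (lm mu : ℝ) (X : M7) : fr (Jop lm mu X) = lm * fc X := by
  simp [Iop, Jop, Kop, fa, fb, fc, fa', fb', fc', fp, fq, fr, fp', fq', fr', mA, mB, mC, mA', mB', mC', mP, mQ, mR, mP', mQ', mR', Eij, Matrix.smul_apply, Matrix.sub_apply, Matrix.add_apply, Matrix.single, Matrix.of_apply]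
  try ring

lemma fpp_Jop (lm mu : ℝ) (X : M7) : fp' (Jop lm mu X) = -(lm * fa' X) := by
  simp [Iop, Jop, Kop, fa, fb, fc, fa', fb', fc', fp, fq, fr, fp', fq', fr', mA, mB, mC, mA', mB', mC', mP, mQ, mR, mP', mQ', mR', Eij, Matrix.smul_apply, Matrix.sub_apply, Matrix.add_apply, Matrix.single, Matrix.of_apply]
  try ring

lemma fqp_Jop (lm mu : ℝ) (X : M7) : fq' (Jop lm mu X) = -(lm * fb' X) := by
  simp [Iop, Jop, Kop, fa, fb, fc, fa', fb', fc', fp, fq, fr, fp', fq', fr', mA, mB, mC, mA', mB', mC', mP, mQ, mR, mP', mQ', mR', Eij, Matrix.smul_apply, Matrix.sub_apply, Matrix.add_apply, Matrix.single, Matrix.of_apply]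
  try ring

lemma frp_Jop (lm mu : ℝ) (X : M7) : fr' (Jop lm mu X) = -(lm * fc' X) := by
  simp [Iop, Jop, Kop, fa, fb, fc, fa', fb', fc', fp, fq, fr, fp', fq', fr', mA, mB, mC, mA', mB', mC', mP, mQ, mR, mP', mQ', mR', Eij, Matrix.smul_apply, Matrix.sub_apply, Matrix.add_apply, Matrix.single, Matrix.of_apply]
  try ring

lemma fa_Kop (lm mu : ℝ) (X : M7) : fa (Kop lm mu X) = -(mu * fp' X) := by
  simp [Iop, Jop, Kop, fa, fb, fc, fa', fb', fc', fp, fq, fr, fp', fq', fr', mA, mB, mC, mA', mB', mC', mP, mQ, mR, mP', mQ', mR', Eij, Matrix.smul_apply, Matrix.sub_apply, Matrix.add_apply, Matrix.single, Matrix.of_apply]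
  try ring

lemma fb_Kop (lm mu : ℝ) (X : M7) : fb (Kop lm mu X) = -(mu * fq' X) := by
  simp [Iop, Jop, Kop, fa, fb, fc, fa', fb', fc', fp, fq, fr, fp', fq', fr', mA, mB, mC, mA', mB', mC', mP, mQ, mR, mP', mQ', mR', Eij, Matrix.smul_apply, Matrix.sub_apply, Matrix.add_apply, Matrix.single, Matrix.of_apply]
  try ring

lemma fc_Kop (lm mu : ℝ) (X : M7) : fc (Kop lm mu X) = -(mu * fr' X) := by
  simp [Iop, Jop, Kop, fa, fb, fc, fa', fb', fc', fp, fq, fr, fp', fq', fr', mA, mB, mC, mA', mB', mC', mP, mQ, mR, mP', mQ', mR', Eij, Matrix.smul_apply, Matrix.sub_apply, Matrix.add_apply, Matrix.single, Matrix.of_apply]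
  try ring

lemma fap_Kop (lm mu : ℝ) (X : M7) : fa' (Kop lm mu X) = -(mu * fp X) := by
  simp [Iop, Jop, Kop, fa, fb, fc, fa', fb', fc', fp, fq, fr, fp', fq', fr', mA, mB, mC, mA', mB', mC', mP, mQ, mR, mP', mQ', mR', Eij, Matrix.smul_apply, Matrix.sub_apply, Matrix.add_apply, Matrix.single, Matrix.of_apply]
  try ring

lemma fbp_Kop (lm mu : ℝ) (X : M7) : fb' (Kop lm mu X) = -(mu * fq X) := by
  simp [Iop, Jop, Kop, fa, fb, fc, fa', fb', fc', fp, fq, fr, fp', fq', fr', mA, mB, mC, mA', mB', mC', mP, mQ, mR, mP', mQ', mR', Eij, Matrix.smul_apply, Matrix.sub_apply, Matrix.add_apply, Matrix.single, Matrix.of_apply]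
  try ring

lemma fcp_Kop (lm mu : ℝ) (X : M7) : fc' (Kop lm mu X) = -(mu * fr X) := by
  simp [Iop, Jop, Kop, fa, fb, fc, fa', fb', fc', fp, fq, fr, fp', fq', fr', mA, mB, mC, mA', mB', mC', mP, mQ, mR, mP', mQ', mR', Eij, Matrix.smul_apply, Matrix.sub_apply, Matrix.add_apply, Matrix.single, Matrix.of_apply]
  try ring

lemma fp_Kop (lm mu : ℝ) (X : M7) : fp (Kop lm mu X) = lm * fa' X := by
  simp [Iop, Jop, Kop, fa, fb, fc, fa', fb', fc', fp, fq, fr, fp', fq', fr', mA, mB, mC, mA', mB', mC', mP, mQ, mR, mP', mQ', mR', Eij, Matrix.smul_apply, Matrix.sub_apply, Matrix.add_apply, Matrix.single, Matrix.of_apply]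
  try ring

lemma fq_Kop (lm mu : ℝ) (X : M7) : fq (Kop lm mu X) = lm * fb' X := by
  simp [Iop, Jop, Kop, fa, fb, fc, fa', fb', fc', fp, fq, fr, fp', fq', fr', mA, mB, mC, mA', mB', mC', mP, mQ, mR, mP', mQ', mR', Eij, Matrix.smul_apply, Matrix.sub_apply, Matrix.add_apply, Matrix.single, Matrix.of_apply]
  try ring

lemma fr_Kop (lm mu : ℝ) (X : M7) : fr (Kop lm mu X) = lm * fc' X := by
  simp [Iop, Jop, Kop, fa, fb, fc, fa', fb', fc', fp, fq, fr, fp', fq', fr', mA, mB, mC, mA', mB', mC', mP, mQ, mR, mP', mQ', mR', Eij, Matrix.smul_apply, Matrix.sub_apply, Matrix.add_apply, Matrix.single, Matrix.of_apply]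
  try ring

lemma fpp_Kop (lm mu : ℝ) (X : M7) : fp' (Kop lm mu X) = lm * fa X := by
  simp [Iop, Jop, Kop, fa, fb, fc, fa', fb', fc', fp, fq, fr, fp', fq', fr', mA, mB, mC, mA', mB', mC', mP, mQ, mR, mP', mQ', mR', Eij, Matrix.smul_apply, Matrix.sub_apply, Matrix.add_apply, Matrix.single, Matrix.of_apply]
  try ring

lemma fqp_Kop (lm mu : ℝ) (X : M7) : fq' (Kop lm mu X) = lm * fb X := by
  simp [Iop, Jop, Kop, fa, fb, fc, fa', fb', fc', fp, fq, fr, fp', fq', fr', mA, mB, mC, mA', mB', mC', mP, mQ, mR, mP', mQ', mR', Eij, Matrix.smul_apply, Matrix.sub_apply, Matrix.add_apply, Matrix.single, Matrix.of_apply]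
  try ring

lemma frp_Kop (lm mu : ℝ) (X : M7) : fr' (Kop lm mu X) = lm * fc X := by
  simp [Iop, Jop, Kop, fa, fb, fc, fa', fb', fc', fp, fq, fr, fp', fq', fr', mA, mB, mC, mA', mB', mC', mP, mQ, mR, mP', mQ', mR', Eij, Matrix.smul_apply, Matrix.sub_apply, Matrix.add_apply, Matrix.single, Matrix.of_apply]
  try ring

end

/-- for λ, μ > 0 with λμ = 1, g is compatible with I, J, K and
ω_I, ω_J, ω_K are the associated Kähler forms. -/
theorem stmt7 (lm mu : ℝ) (hl : 0 < lm) (hm : 0 < mu) (h : lm * mu = 1) :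
    ∀ X ∈ mm, ∀ Y ∈ mm,
      gmet lm mu (Iop X) (Iop Y) = gmet lm mu X Y ∧
      gmet lm mu (Jop lm mu X) (Jop lm mu Y) = gmet lm mu X Y ∧
      gmet lm mu (Kop lm mu X) (Kop lm mu Y) = gmet lm mu X Y ∧
      omI lm mu X Y = gmet lm mu X (Iop Y) ∧
      omJ X Y = gmet lm mu X (Jop lm mu Y) ∧
      omK X Y = gmet lm mu X (Kop lm mu Y) := by
  have hlm : lm ≠ 0 := ne_of_gt hl
  have hmu : mu = 1/lm := by field_simp; linarith [h]
  subst hmu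
  intro X _ Y _
  refine ⟨?_, ?_, ?_, ?_, ?_, ?_⟩ <;>
  · simp only [gmet, omI, omJ, omK, om0, omt0, wdg2,
      fa_Iop, fb_Iop, fc_Iop, fap_Iop, fbp_Iop, fcp_Iop,
      fp_Iop, fq_Iop, fr_Iop, fpp_Iop, fqp_Iop, frp_Iop,
      fa_Jop, fb_Jop, fc_Jop, fap_Jop, fbp_Jop, fcp_Jop,
      fp_Jop, fq_Jop, fr_Jop, fpp_Jop, fqp_Jop, frp_Jop,
      fa_Kop, fb_Kop, fc_Kop, fap_Kop, fbp_Kop, fcp_Kop,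
      fp_Kop, fq_Kop, fr_Kop, fpp_Kop, fqp_Kop, frp_Kop]
    field_simp
    ring
end

section
/- For λ, μ > 0 with λμ = 1, the 3-form d_Mω_I is primitive with respect to ω_I: for every g-orthonormal basis (u₁,…,u₁₂) of 𝔪 and every Z ∈ 𝔪 one has Σᵢ (d_Mω_I)(uᵢ, Iuᵢ, Z) = 0; equivalently, d_Mω_I is g-orthogonal to all 3-forms of the form ω_I ∧ α with α a linear functional on 𝔪. -/
/-!
Common setup: 𝔤 = 𝔰𝔬(7) realised as real skew-symmetric 7×7 matrices with
bracket `bk X Y = X*Y - Y*X`; the matrices A, B, C, A', B', C', P, Q, R, P', Q', R', E;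
the subspaces 𝔪 (`mm`) and 𝔲(3) (`u3`); the dual functionals a, …, r' (written
`fa, …, fr'`), given by the explicit formulas that characterise them as the unique
linear functionals on 𝔰𝔬(7) vanishing on 𝔲(3) whose restrictions to 𝔪 are dual to
the chosen basis; the invariant forms; the endomorphisms I, J, K; and the
Chevalley–Eilenberg differentials `dM1`, `dM2` restricted to 𝔪.
-/

open Matrix

namespace S18
open Matrix

noncomputable section

def basL : Fin 12 → M7
  | 0 => mA | 1 => mB | 2 => mC | 3 => mA' | 4 => mB' | 5 => mC'
  | 6 => mP | 7 => mQ | 8 => mR | 9 => mP' | 10 => mQ' | 11 => mR'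

def crdL : Fin 12 → M7 → ℝ
  | 0 => fa | 1 => fb | 2 => fc | 3 => fa' | 4 => fb' | 5 => fc'
  | 6 => fp | 7 => fq | 8 => fr | 9 => fp' | 10 => fq' | 11 => fr'

def dvL (lm mu : ℝ) : Fin 12 → ℝ
  | 0 | 1 | 2 | 3 | 4 | 5 => lm
  | _ => mu

def IbL : Fin 12 → M7
  | 0 => mA' | 1 => mB' | 2 => mC' | 3 => -mA | 4 => -mB | 5 => -mC
  | 6 => mP' | 7 => mQ' | 8 => mR' | 9 => -mP | 10 => -mQ | 11 => -mR

lemma sum12 {α : Type*} [AddCommMonoid α] (f : Fin 12 → α) :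
    ∑ i, f i = f 0 + f 1 + f 2 + f 3 + f 4 + f 5 + f 6 + f 7 + f 8 + f 9 + f 10 + f 11 := by
  rw [Fin.sum_univ_castSucc, Fin.sum_univ_castSucc, Fin.sum_univ_castSucc, Fin.sum_univ_castSucc,
    Fin.sum_univ_eight]
  rfl

lemma crdL_add (k : Fin 12) (x y : M7) : crdL k (x + y) = crdL k x + crdL k y := by
  fin_cases k <;>
    simp [crdL, fa, fb, fc, fa', fb', fc', fp, fq, fr, fp', fq', fr', Matrix.add_apply] <;> ring

lemma crdL_smul (k : Fin 12) (s : ℝ) (x : M7) : crdL k (s • x) = s * crdL k x := by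
  fin_cases k <;>
    simp [crdL, fa, fb, fc, fa', fb', fc', fp, fq, fr, fp', fq', fr', Matrix.smul_apply,
      smul_eq_mul] <;> ring

lemma crdL_zero (k : Fin 12) : crdL k 0 = 0 := by
  rw [← zero_smul ℝ (0 : M7), crdL_smul]; ring

set_option maxHeartbeats 2000000 in
lemma crdL_basL (k l : Fin 12) : crdL k (basL l) = if k = l then 1 else 0 := by
  fin_cases k <;> fin_cases l <;>
    · simp (config := { decide := true }) only [crdL, basL, fa, fb, fc, fa', fb', fc', fp, fq, fr,
        fp', fq', fr', mA, mB, mC, mA', mB', mC', mP, mQ, mR, mP', mQ', mR', Eij,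
        Matrix.single, Matrix.sub_apply, Matrix.of_apply]
      norm_num

lemma expand_bas (l : Fin 12) : basL l = ∑ k, crdL k (basL l) • basL k := by
  simp [crdL_basL, ite_smul, one_smul, zero_smul, Finset.sum_ite_eq, Finset.mem_univ]

lemma expand {X : M7} (hX : X ∈ mm) : X = ∑ k, crdL k X • basL k := by
  induction hX using Submodule.span_induction with
  | mem x hx =>
    simp only [Set.mem_insert_iff, Set.mem_singleton_iff] at hx
    rcases hx with rfl|rfl|rfl|rfl|rfl|rfl|rfl|rfl|rfl|rfl|rfl|rfl
    · exact expand_bas 0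
    · exact expand_bas 1
    · exact expand_bas 2
    · exact expand_bas 3
    · exact expand_bas 4
    · exact expand_bas 5
    · exact expand_bas 6
    · exact expand_bas 7
    · exact expand_bas 8
    · exact expand_bas 9
    · exact expand_bas 10
    · exact expand_bas 11
  | zero => simp [crdL_zero]
  | add x y hx hy ihx ihy =>
    conv_lhs => rw [ihx, ihy]
    simp only [crdL_add, add_smul, Finset.sum_add_distrib]
  | smul s x hx ihx =>
    conv_lhs => rw [ihx]
    rw [Finset.smul_sum]
    simp only [crdL_smul, smul_smul]

lemma gmet_expand (lm mu : ℝ) (X Y : M7) :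
    gmet lm mu X Y = ∑ k, dvL lm mu k * (crdL k X * crdL k Y) := by
  rw [sum12]
  show gmet lm mu X Y = lm * (fa X * fa Y) + lm * (fb X * fb Y) + lm * (fc X * fc Y)
    + lm * (fa' X * fa' Y) + lm * (fb' X * fb' Y) + lm * (fc' X * fc' Y)
    + mu * (fp X * fp Y) + mu * (fq X * fq Y) + mu * (fr X * fr Y)
    + mu * (fp' X * fp' Y) + mu * (fq' X * fq' Y) + mu * (fr' X * fr' Y)
  unfold gmet; ring

end
end S18
namespace S18
open Matrix
noncomputable section

lemma omI_add_l (lm mu : ℝ) (x y z : M7) :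
    omI lm mu (x + y) z = omI lm mu x z + omI lm mu y z := by
  simp only [omI, om0, omt0, wdg2, fa, fb, fc, fa', fb', fc', fp, fq, fr, fp', fq', fr',
    Matrix.add_apply]
  ring

lemma omI_add_r (lm mu : ℝ) (x y z : M7) :
    omI lm mu x (y + z) = omI lm mu x y + omI lm mu x z := by
  simp only [omI, om0, omt0, wdg2, fa, fb, fc, fa', fb', fc', fp, fq, fr, fp', fq', fr',
    Matrix.add_apply]
  ring

lemma omI_smul_l (lm mu s : ℝ) (x y : M7) : omI lm mu (s • x) y = s * omI lm mu x y := by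
  simp only [omI, om0, omt0, wdg2, fa, fb, fc, fa', fb', fc', fp, fq, fr, fp', fq', fr',
    Matrix.smul_apply, smul_eq_mul]
  ring

lemma omI_smul_r (lm mu s : ℝ) (x y : M7) : omI lm mu x (s • y) = s * omI lm mu x y := by
  simp only [omI, om0, omt0, wdg2, fa, fb, fc, fa', fb', fc', fp, fq, fr, fp', fq', fr',
    Matrix.smul_apply, smul_eq_mul]
  ring

lemma bk_add_l (x y z : M7) : bk (x + y) z = bk x z + bk y z := by
  simp only [bk, add_mul, mul_add]; abel

lemma bk_add_r (x y z : M7) : bk x (y + z) = bk x y + bk x z := by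
  simp only [bk, add_mul, mul_add]; abel

lemma bk_smul_l (s : ℝ) (x y : M7) : bk (s • x) y = s • bk x y := by
  simp only [bk, smul_mul_assoc, mul_smul_comm, smul_sub]

lemma bk_smul_r (s : ℝ) (x y : M7) : bk x (s • y) = s • bk x y := by
  simp only [bk, smul_mul_assoc, mul_smul_comm, smul_sub]

def dM2L1 (lm mu : ℝ) (Y Z : M7) : M7 →ₗ[ℝ] ℝ where
  toFun X := dM2 (omI lm mu) X Y Z
  map_add' x y := by
    simp only [dM2, bk_add_l, omI_add_l, omI_add_r]; ring
  map_smul' s x := by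
    simp only [dM2, bk_smul_l, omI_smul_l, omI_smul_r, RingHom.id_apply, smul_eq_mul]; ring

def dM2L2 (lm mu : ℝ) (X Z : M7) : M7 →ₗ[ℝ] ℝ where
  toFun Y := dM2 (omI lm mu) X Y Z
  map_add' x y := by
    simp only [dM2, bk_add_l, bk_add_r, omI_add_l, omI_add_r]; ring
  map_smul' s x := by
    simp only [dM2, bk_smul_l, bk_smul_r, omI_smul_l, omI_smul_r, RingHom.id_apply,
      smul_eq_mul]; ring

def dM2L3 (lm mu : ℝ) (X Y : M7) : M7 →ₗ[ℝ] ℝ where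
  toFun Z := dM2 (omI lm mu) X Y Z
  map_add' x y := by
    simp only [dM2, bk_add_l, bk_add_r, omI_add_l, omI_add_r]; ring
  map_smul' s x := by
    simp only [dM2, bk_smul_l, bk_smul_r, omI_smul_l, omI_smul_r, RingHom.id_apply,
      smul_eq_mul]; ring

lemma dM2_sum1 (lm mu : ℝ) (Y Z : M7) (g : Fin 12 → ℝ) (v : Fin 12 → M7) :
    dM2 (omI lm mu) (∑ k, g k • v k) Y Z = ∑ k, g k * dM2 (omI lm mu) (v k) Y Z := by
  have h := map_sum (dM2L1 lm mu Y Z) (fun k => g k • v k) Finset.univ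
  simp only [_root_.map_smul, smul_eq_mul, dM2L1, LinearMap.coe_mk, AddHom.coe_mk] at h
  exact h

lemma dM2_sum2 (lm mu : ℝ) (X Z : M7) (g : Fin 12 → ℝ) (v : Fin 12 → M7) :
    dM2 (omI lm mu) X (∑ k, g k • v k) Z = ∑ k, g k * dM2 (omI lm mu) X (v k) Z := by
  have h := map_sum (dM2L2 lm mu X Z) (fun k => g k • v k) Finset.univ
  simp only [_root_.map_smul, smul_eq_mul, dM2L2, LinearMap.coe_mk, AddHom.coe_mk] at h
  exact h

lemma dM2_sum3 (lm mu : ℝ) (X Y : M7) (g : Fin 12 → ℝ) (v : Fin 12 → M7) :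
    dM2 (omI lm mu) X Y (∑ k, g k • v k) = ∑ k, g k * dM2 (omI lm mu) X Y (v k) := by
  have h := map_sum (dM2L3 lm mu X Y) (fun k => g k • v k) Finset.univ
  simp only [_root_.map_smul, smul_eq_mul, dM2L3, LinearMap.coe_mk, AddHom.coe_mk] at h
  exact h

def IopL : M7 →ₗ[ℝ] M7 where
  toFun := Iop
  map_add' x y := by
    simp only [Iop, fa, fb, fc, fa', fb', fc', fp, fq, fr, fp', fq', fr', Matrix.add_apply]
    module
  map_smul' s x := by
    simp only [Iop, fa, fb, fc, fa', fb', fc', fp, fq, fr, fp', fq', fr', Matrix.smul_apply,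
      smul_eq_mul, RingHom.id_apply]
    module

lemma Iop_sum (g : Fin 12 → ℝ) (v : Fin 12 → M7) :
    Iop (∑ k, g k • v k) = ∑ k, g k • Iop (v k) := by
  have h := map_sum IopL (fun k => g k • v k) Finset.univ
  simp only [_root_.map_smul, IopL, LinearMap.coe_mk, AddHom.coe_mk] at h
  exact h

set_option maxHeartbeats 1000000 in
lemma Iop_basL (k : Fin 12) : Iop (basL k) = IbL k := by
  fin_cases k <;>
    · simp (config := { decide := true }) only [Iop, basL, IbL, fa, fb, fc, fa', fb', fc',
        fp, fq, fr, fp', fq', fr', mA, mB, mC, mA', mB', mC', mP, mQ, mR, mP', mQ', mR', Eij,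
        Matrix.single, Matrix.sub_apply, Matrix.of_apply]
      norm_num

end
end S18
namespace S18
open Matrix
noncomputable section

section Contraction
variable (lm mu : ℝ) (X : M7)

set_option maxHeartbeats 1000000 in
lemma omI_R_mA : omI lm mu X mA = lm * fa' X := by
  simp (config := { decide := true }) only [omI, om0, omt0, wdg2, fa, fb, fc, fa', fb', fc',
    fp, fq, fr, fp', fq', fr', mA, Eij, Matrix.single, Matrix.sub_apply, Matrix.of_apply, if_true, if_false]
  ring

set_option maxHeartbeats 1000000 in
lemma omI_R_mB : omI lm mu X mB = lm * fb' X := by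
  simp (config := { decide := true }) only [omI, om0, omt0, wdg2, fa, fb, fc, fa', fb', fc',
    fp, fq, fr, fp', fq', fr', mB, Eij, Matrix.single, Matrix.sub_apply, Matrix.of_apply, if_true, if_false]
  ring

set_option maxHeartbeats 1000000 in
lemma omI_R_mC : omI lm mu X mC = lm * fc' X := by
  simp (config := { decide := true }) only [omI, om0, omt0, wdg2, fa, fb, fc, fa', fb', fc',
    fp, fq, fr, fp', fq', fr', mC, Eij, Matrix.single, Matrix.sub_apply, Matrix.of_apply, if_true, if_false]
  ring

set_option maxHeartbeats 1000000 in
lemma omI_R_mA' : omI lm mu X mA' = -(lm * fa X) := by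
  simp (config := { decide := true }) only [omI, om0, omt0, wdg2, fa, fb, fc, fa', fb', fc',
    fp, fq, fr, fp', fq', fr', mA', Eij, Matrix.single, Matrix.sub_apply, Matrix.of_apply, if_true, if_false]
  ring

set_option maxHeartbeats 1000000 in
lemma omI_R_mB' : omI lm mu X mB' = -(lm * fb X) := by
  simp (config := { decide := true }) only [omI, om0, omt0, wdg2, fa, fb, fc, fa', fb', fc',
    fp, fq, fr, fp', fq', fr', mB', Eij, Matrix.single, Matrix.sub_apply, Matrix.of_apply, if_true, if_false]
  ring

set_option maxHeartbeats 1000000 in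
lemma omI_R_mC' : omI lm mu X mC' = -(lm * fc X) := by
  simp (config := { decide := true }) only [omI, om0, omt0, wdg2, fa, fb, fc, fa', fb', fc',
    fp, fq, fr, fp', fq', fr', mC', Eij, Matrix.single, Matrix.sub_apply, Matrix.of_apply, if_true, if_false]
  ring

set_option maxHeartbeats 1000000 in
lemma omI_R_mP : omI lm mu X mP = mu * fp' X := by
  simp (config := { decide := true }) only [omI, om0, omt0, wdg2, fa, fb, fc, fa', fb', fc',
    fp, fq, fr, fp', fq', fr', mP, Eij, Matrix.single, Matrix.sub_apply, Matrix.of_apply, if_true, if_false]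
  ring

set_option maxHeartbeats 1000000 in
lemma omI_R_mQ : omI lm mu X mQ = mu * fq' X := by
  simp (config := { decide := true }) only [omI, om0, omt0, wdg2, fa, fb, fc, fa', fb', fc',
    fp, fq, fr, fp', fq', fr', mQ, Eij, Matrix.single, Matrix.sub_apply, Matrix.of_apply, if_true, if_false]
  ring

set_option maxHeartbeats 1000000 in
lemma omI_R_mR : omI lm mu X mR = mu * fr' X := by
  simp (config := { decide := true }) only [omI, om0, omt0, wdg2, fa, fb, fc, fa', fb', fc',
    fp, fq, fr, fp', fq', fr', mR, Eij, Matrix.single, Matrix.sub_apply, Matrix.of_apply, if_true, if_false]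
  ring

set_option maxHeartbeats 1000000 in
lemma omI_R_mP' : omI lm mu X mP' = -(mu * fp X) := by
  simp (config := { decide := true }) only [omI, om0, omt0, wdg2, fa, fb, fc, fa', fb', fc',
    fp, fq, fr, fp', fq', fr', mP', Eij, Matrix.single, Matrix.sub_apply, Matrix.of_apply, if_true, if_false]
  ring

set_option maxHeartbeats 1000000 in
lemma omI_R_mQ' : omI lm mu X mQ' = -(mu * fq X) := by
  simp (config := { decide := true }) only [omI, om0, omt0, wdg2, fa, fb, fc, fa', fb', fc',
    fp, fq, fr, fp', fq', fr', mQ', Eij, Matrix.single, Matrix.sub_apply, Matrix.of_apply, if_true, if_false]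
  ring

set_option maxHeartbeats 1000000 in
lemma omI_R_mR' : omI lm mu X mR' = -(mu * fr X) := by
  simp (config := { decide := true }) only [omI, om0, omt0, wdg2, fa, fb, fc, fa', fb', fc',
    fp, fq, fr, fp', fq', fr', mR', Eij, Matrix.single, Matrix.sub_apply, Matrix.of_apply, if_true, if_false]
  ring

lemma omI_R_neg (Y : M7) : omI lm mu X (-Y) = -omI lm mu X Y := by
  simp only [omI, om0, omt0, wdg2, fa, fb, fc, fa', fb', fc', fp, fq, fr, fp', fq', fr',
    Matrix.neg_apply]
  ring

end Contraction

end
end S18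
namespace S18
open Matrix
noncomputable section

lemma dvL_cases (lm mu : ℝ) (k : Fin 12) : dvL lm mu k = lm ∨ dvL lm mu k = mu := by
  fin_cases k <;> simp [dvL]

set_option maxHeartbeats 400000000 in
lemma Tzero (lm mu : ℝ) (k m : Fin 12) :
    dM2 (omI lm mu) (basL k) (IbL k) (basL m) = 0 := by
  fin_cases k <;> fin_cases m <;>
    · simp only [basL, IbL, dM2, omI_R_neg, omI_R_mA, omI_R_mB, omI_R_mC, omI_R_mA', omI_R_mB',
        omI_R_mC', omI_R_mP, omI_R_mQ, omI_R_mR, omI_R_mP', omI_R_mQ', omI_R_mR']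
      simp (config := { decide := true }) only [bk, fa, fb, fc, fa', fb', fc', fp, fq, fr,
        fp', fq', fr', mA, mB, mC, mA', mB', mC', mP, mQ, mR, mP', mQ', mR', Eij,
        Matrix.single, Matrix.sub_apply, Matrix.neg_apply, Matrix.mul_apply,
        Fin.sum_univ_seven, Matrix.of_apply, if_true, if_false]
      ring

end
end S18
/-- for λ, μ > 0 with λμ = 1, the 3-form d_Mω_I is primitive: for every
g-orthonormal basis (u₁,…,u₁₂) of 𝔪 and every Z ∈ 𝔪, Σᵢ d_Mω_I(uᵢ, Iuᵢ, Z) = 0. -/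
theorem stmt18 (lm mu : ℝ) (hl : 0 < lm) (hm : 0 < mu) (h : lm * mu = 1) :
    ∀ u : Fin 12 → M7,
      (∀ i, u i ∈ mm) →
      (∀ i j, gmet lm mu (u i) (u j) = if i = j then 1 else 0) →
      (∀ X ∈ mm, X ∈ Submodule.span ℝ (Set.range u)) →
      ∀ Z ∈ mm, ∑ i : Fin 12, dM2 (omI lm mu) (u i) (Iop (u i)) Z = 0 := by
  intro u hu hon _hspan Z hZ
  classical
  obtain ⟨z, hz⟩ : ∃ z : Fin 12 → ℝ, Z = ∑ m, z m • S18.basL m := ⟨_, S18.expand hZ⟩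
  obtain ⟨c, hc1, hc2⟩ : ∃ c : Fin 12 → Fin 12 → ℝ,
      (∀ i, u i = ∑ k, c i k • S18.basL k) ∧ (∀ i k, c i k = S18.crdL k (u i)) :=
    ⟨fun i k => S18.crdL k (u i), fun i => S18.expand (hu i), fun _ _ => rfl⟩
  have hG : ∀ i j, (∑ k, S18.dvL lm mu k * (c i k * c j k)) = if i = j then 1 else 0 := by
    intro i j
    have hg := hon i j
    rw [S18.gmet_expand] at hg
    simp only [← hc2] at hg
    exact hg
  set D : Matrix (Fin 12) (Fin 12) ℝ := Matrix.diagonal (S18.dvL lm mu) with hD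
  set C : Matrix (Fin 12) (Fin 12) ℝ := Matrix.of (fun i k => c i k) with hC
  have h1 : C * (D * Cᵀ) = 1 := by
    ext i j
    rw [Matrix.mul_apply]
    simp only [hC, hD, Matrix.diagonal_mul, Matrix.transpose_apply, Matrix.of_apply,
      Matrix.one_apply]
    rw [← hG i j]
    exact Finset.sum_congr rfl fun k _ => by ring
  have h2 : (D * Cᵀ) * C = 1 := mul_eq_one_comm.mp h1
  have key : ∀ k l : Fin 12,
      (∑ i, c i k * c i l) = if k = l then (S18.dvL lm mu k)⁻¹ else 0 := by
    intro k l
    have e0 : ((D * Cᵀ) * C) k l = (1 : Matrix (Fin 12) (Fin 12) ℝ) k l := by rw [h2]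
    rw [Matrix.mul_apply] at e0
    simp only [hC, hD, Matrix.diagonal_mul, Matrix.transpose_apply, Matrix.of_apply,
      Matrix.one_apply] at e0
    have e1 : S18.dvL lm mu k * ∑ i, c i k * c i l = if k = l then 1 else 0 := by
      rw [Finset.mul_sum, ← e0]
      exact Finset.sum_congr rfl fun i _ => by ring
    have hdv : S18.dvL lm mu k ≠ 0 := by
      rcases S18.dvL_cases lm mu k with hk | hk <;> rw [hk]
      · exact ne_of_gt hl
      · exact ne_of_gt hm
    by_cases hkl : k = l
    · rw [if_pos hkl] at e1 ⊢
      exact eq_inv_of_mul_eq_one_right (by rw [mul_comm, ← e1]; ring)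
    · rw [if_neg hkl] at e1 ⊢
      exact (mul_eq_zero.mp e1).resolve_left hdv
  have hW : ∀ k, dM2 (omI lm mu) (S18.basL k) (S18.IbL k) Z = 0 := by
    intro k
    rw [hz, S18.dM2_sum3]
    simp [S18.Tzero]
  have hsummand : ∀ i, dM2 (omI lm mu) (u i) (Iop (u i)) Z
      = ∑ k, ∑ l, (c i k * c i l) * dM2 (omI lm mu) (S18.basL k) (S18.IbL l) Z := by
    intro i
    have hIu : Iop (u i) = ∑ l, c i l • S18.IbL l := by
      rw [hc1 i, S18.Iop_sum]
      exact Finset.sum_congr rfl fun l _ => by rw [S18.Iop_basL]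
    rw [hIu, hc1 i, S18.dM2_sum1]
    refine Finset.sum_congr rfl fun k _ => ?_
    rw [S18.dM2_sum2, Finset.mul_sum]
    exact Finset.sum_congr rfl fun l _ => by ring
  calc ∑ i, dM2 (omI lm mu) (u i) (Iop (u i)) Z
      = ∑ i : Fin 12, ∑ k, ∑ l, (c i k * c i l) * dM2 (omI lm mu) (S18.basL k) (S18.IbL l) Z :=
        Finset.sum_congr rfl fun i _ => hsummand i
    _ = ∑ k, ∑ l : Fin 12,
          (∑ i : Fin 12, c i k * c i l) * dM2 (omI lm mu) (S18.basL k) (S18.IbL l) Z := by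
        rw [Finset.sum_comm]
        refine Finset.sum_congr rfl fun k _ => ?_
        rw [Finset.sum_comm]
        refine Finset.sum_congr rfl fun l _ => ?_
        rw [Finset.sum_mul]
    _ = ∑ k : Fin 12, (S18.dvL lm mu k)⁻¹ * dM2 (omI lm mu) (S18.basL k) (S18.IbL k) Z := by
        refine Finset.sum_congr rfl fun k _ => ?_
        simp only [key, ite_mul, zero_mul]
        rw [Finset.sum_ite_eq]
        simp
    _ = 0 := by simp [hW]
end
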